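/- For the congruence quotients Γ_k of the first Grigorchuk group (image of Γ in Aut(T(k))), one has |Γ_k| = 2^{5·2^{k-3}+2} for all k ≥ 3. -/

import Mathlib

set_option maxRecDepth 100000


/-- The generator `a`: flip the first letter. -/
def aFun : List Bool → List Bool
  | [] => []
  | x :: xs => (!x) :: xs

mutual
/-- The generator `b` of the first Grigorchuk group, `b = (a, c)`. -/
def bFun : List Bool → List Bool
  | [] => []
  | false :: xs => false :: aFun xs
  | true :: xs => true :: cFun xs
/-- The generator `c` of the first Grigorchuk group, `c = (a, d)`. -/
def cFun : List Bool → List Bool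
  | [] => []
  | false :: xs => false :: aFun xs
  | true :: xs => true :: dFun xs
/-- The generator `d` of the first Grigorchuk group, `d = (1, b)`. -/
def dFun : List Bool → List Bool
  | [] => []
  | false :: xs => false :: xs
  | true :: xs => true :: bFun xs
end

theorem aFun_inv : Function.Involutive aFun := by
  intro l; cases l <;> simp [aFun]

theorem bcd_inv : ∀ l : List Bool, bFun (bFun l) = l ∧ cFun (cFun l) = l ∧ dFun (dFun l) = l := by
  intro l
  induction l with
  | nil => simp [bFun, cFun, dFun]
  | cons x xs ih =>
    cases x <;> simp [bFun, cFun, dFun, aFun_inv xs, ih.1, ih.2.1, ih.2.2]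

/-- The automorphism `a` of the rooted binary tree. -/
def aP : Equiv.Perm (List Bool) := Function.Involutive.toPerm aFun aFun_inv
/-- The automorphism `b` of the rooted binary tree. -/
def bP : Equiv.Perm (List Bool) := Function.Involutive.toPerm bFun (fun l => (bcd_inv l).1)
/-- The automorphism `c` of the rooted binary tree. -/
def cP : Equiv.Perm (List Bool) := Function.Involutive.toPerm cFun (fun l => (bcd_inv l).2.1)
/-- The automorphism `d` of the rooted binary tree. -/
def dP : Equiv.Perm (List Bool) := Function.Involutive.toPerm dFun (fun l => (bcd_inv l).2.2)

/-- The first Grigorchuk group `Γ = ⟨a, b, c, d⟩ ≤ Aut(T)`. -/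
def Grigorchuk : Subgroup (Equiv.Perm (List Bool)) :=
  Subgroup.closure {aP, bP, cP, dP}
open Equiv (Perm)

abbrev LB := List Bool

theorem aFun_len : ∀ l : LB, (aFun l).length = l.length := by
  intro l; cases l <;> simp [aFun]

theorem bcd_len : ∀ l : LB, (bFun l).length = l.length ∧ (cFun l).length = l.length ∧
    (dFun l).length = l.length := by
  intro l
  induction l with
  | nil => simp [bFun, cFun, dFun]
  | cons x xs ih => cases x <;> simp [bFun, cFun, dFun, aFun_len, ih.1, ih.2.1, ih.2.2]

theorem bcd_head : ∀ l : LB, (bFun l).head? = l.head? ∧ (cFun l).head? = l.head? ∧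
    (dFun l).head? = l.head? := by
  intro l; rcases l with _ | ⟨_ | _, xs⟩ <;> simp [bFun, cFun, dFun]

theorem aFun_app : ∀ (v : LB) (x : Bool), ∃ y, aFun (v ++ [x]) = aFun v ++ [y] := by
  intro v x
  cases v with
  | nil => exact ⟨!x, rfl⟩
  | cons h t => exact ⟨x, rfl⟩

theorem bcd_app : ∀ (v : LB) (x : Bool),
    (∃ y, bFun (v ++ [x]) = bFun v ++ [y]) ∧ (∃ y, cFun (v ++ [x]) = cFun v ++ [y]) ∧
    (∃ y, dFun (v ++ [x]) = dFun v ++ [y]) := by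
  intro v
  induction v with
  | nil =>
    intro x
    refine ⟨⟨x, ?_⟩, ⟨x, ?_⟩, ⟨x, ?_⟩⟩ <;> cases x <;> rfl
  | cons h t ih =>
    intro x
    cases h
    · obtain ⟨y, hy⟩ := aFun_app t x
      exact ⟨⟨y, by simp [bFun, hy]⟩, ⟨y, by simp [cFun, hy]⟩, ⟨x, by simp [dFun]⟩⟩
    · obtain ⟨y1, h1⟩ := (ih x).1
      obtain ⟨y2, h2⟩ := (ih x).2.1
      obtain ⟨y3, h3⟩ := (ih x).2.2
      exact ⟨⟨y2, by simp [bFun, h2]⟩, ⟨y3, by simp [cFun, h3]⟩, ⟨y1, by simp [dFun, h1]⟩⟩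

/-- The Klein four group relations among b, c, d. -/
theorem bcd_klein : ∀ l : LB,
    bFun (cFun l) = dFun l ∧ cFun (dFun l) = bFun l ∧ dFun (bFun l) = cFun l ∧
    cFun (bFun l) = dFun l ∧ dFun (cFun l) = bFun l ∧ bFun (dFun l) = cFun l := by
  intro l
  induction l with
  | nil => simp [bFun, cFun, dFun]
  | cons x xs ih =>
    obtain ⟨i1, i2, i3, i4, i5, i6⟩ := ih
    cases x <;> simp [bFun, cFun, dFun, aFun_inv xs, i1, i2, i3, i4, i5, i6]

/-- (ad)^2 acts as (b,b). -/
theorem adad : ∀ l : LB, aFun (dFun (aFun (dFun l))) =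
    (match l with | [] => [] | x :: xs => x :: bFun xs : LB) := by
  intro l
  rcases l with _ | ⟨_ | _, xs⟩ <;> rfl

@[simp] theorem coe_aP : ⇑aP = aFun := rfl
@[simp] theorem coe_bP : ⇑bP = bFun := rfl
@[simp] theorem coe_cP : ⇑cP = cFun := rfl
@[simp] theorem coe_dP : ⇑dP = dFun := rfl

theorem aP_sq : aP * aP = 1 := Equiv.ext fun l => aFun_inv l
theorem bP_sq : bP * bP = 1 := Equiv.ext fun l => (bcd_inv l).1
theorem cP_sq : cP * cP = 1 := Equiv.ext fun l => (bcd_inv l).2.1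
theorem dP_sq : dP * dP = 1 := Equiv.ext fun l => (bcd_inv l).2.2
theorem cP_eq : cP = bP * dP := Equiv.ext fun l => ((bcd_klein l).2.2.2.2.2).symm
theorem adP_pow : (aP * dP) * (aP * dP) * ((aP * dP) * (aP * dP)) = 1 := by
  apply Equiv.ext
  intro l
  have h1 : ∀ m : LB, (aP * dP * (aP * dP)) m =
      (match m with | [] => [] | x :: xs => x :: bFun xs : LB) := fun m => adad m
  rcases l with _ | ⟨x, xs⟩
  · rw [Equiv.Perm.mul_apply]; rw [h1, h1]; rfl
  · rw [Equiv.Perm.mul_apply]; rw [h1, h1]; simp [(bcd_inv xs).1]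

theorem aP_mem : aP ∈ Grigorchuk := Subgroup.subset_closure (by simp)
theorem bP_mem : bP ∈ Grigorchuk := Subgroup.subset_closure (by simp)
theorem cP_mem : cP ∈ Grigorchuk := Subgroup.subset_closure (by simp)
theorem dP_mem : dP ∈ Grigorchuk := Subgroup.subset_closure (by simp)

theorem Equiv.Perm.apply_inv_self {α : Type*} (σ : Equiv.Perm α) (x : α) : σ (σ⁻¹ x) = x :=
  Equiv.apply_symm_apply σ x
theorem Equiv.Perm.inv_apply_self {α : Type*} (σ : Equiv.Perm α) (x : α) : σ⁻¹ (σ x) = x :=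
  Equiv.symm_apply_apply σ x

/-- Tree-like permutations: length-preserving and sending cones to cones. -/
def TreeG : Subgroup (Perm LB) where
  carrier := {σ | (∀ l, (σ l).length = l.length) ∧ (∀ v x, ∃ y, σ (v ++ [x]) = σ v ++ [y])}
  one_mem' := ⟨fun l => rfl, fun v x => ⟨x, rfl⟩⟩
  mul_mem' := by
    rintro σ τ ⟨hσ1, hσ2⟩ ⟨hτ1, hτ2⟩
    refine ⟨fun l => by simp [Equiv.Perm.mul_apply, hσ1, hτ1], fun v x => ?_⟩
    obtain ⟨y, hy⟩ := hτ2 v x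
    obtain ⟨z, hz⟩ := hσ2 (τ v) y
    exact ⟨z, by simp [Equiv.Perm.mul_apply, hy, hz]⟩
  inv_mem' := by
    rintro σ ⟨h1, h2⟩
    constructor
    · intro l
      have h := h1 (σ⁻¹ l)
      rw [Equiv.Perm.apply_inv_self] at h
      exact h.symm
    · intro v x
      have hlen : (σ⁻¹ (v ++ [x])).length = v.length + 1 := by
        have h := h1 (σ⁻¹ (v ++ [x]))
        rw [Equiv.Perm.apply_inv_self] at h
        simpa using h.symm
      have hne : σ⁻¹ (v ++ [x]) ≠ [] := by intro h; rw [h] at hlen; simp at hlen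
      obtain ⟨u', c, huc⟩ : ∃ u' c, σ⁻¹ (v ++ [x]) = u' ++ [c] :=
        ⟨_, _, (List.dropLast_append_getLast hne).symm⟩
      obtain ⟨y, hy⟩ := h2 u' c
      have happ : σ u' ++ [y] = v ++ [x] := by rw [← hy, ← huc, Equiv.Perm.apply_inv_self]
      have hl : (σ u').length = v.length := by
        have := congrArg List.length happ; simpa using this
      have h3 : σ u' = v := (List.append_inj happ hl).1
      have h4 : u' = σ⁻¹ v := by rw [← h3, Equiv.Perm.inv_apply_self]
      exact ⟨c, by rw [huc, h4]⟩

theorem mem_TreeG_of_mem : ∀ g ∈ Grigorchuk, g ∈ TreeG := by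
  intro g hg
  refine Subgroup.closure_le TreeG |>.mpr ?_ hg
  rintro σ (rfl | rfl | rfl | rfl)
  · exact ⟨aFun_len, aFun_app⟩
  · exact ⟨fun l => (bcd_len l).1, fun v x => (bcd_app v x).1⟩
  · exact ⟨fun l => (bcd_len l).2.1, fun v x => (bcd_app v x).2.1⟩
  · exact ⟨fun l => (bcd_len l).2.2, fun v x => (bcd_app v x).2.2⟩

theorem len_pres {g : Perm LB} (hg : g ∈ Grigorchuk) : ∀ l : LB, (g l).length = l.length :=
  (mem_TreeG_of_mem g hg).1

/-- Head?-preserving permutations. -/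
def StabG : Subgroup (Perm LB) where
  carrier := {σ | ∀ l, (σ l).head? = l.head?}
  one_mem' := fun l => rfl
  mul_mem' := by
    intro σ τ hσ hτ l
    simp only [Equiv.Perm.mul_apply]
    rw [hσ, hτ]
  inv_mem' := by
    intro σ hσ l
    have h := hσ (σ⁻¹ l)
    rw [Equiv.Perm.apply_inv_self] at h
    exact h.symm

instance V_finite (k : ℕ) : Finite {l : LB // l.length ≤ k} :=
  (List.finite_length_le Bool k).to_subtype

/-- Restriction to the first k levels, as a homomorphism. -/
def phi (k : ℕ) : ↥Grigorchuk →* Perm {l : LB // l.length ≤ k} :=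
  MonoidHom.mk' (fun g => Perm.subtypePerm g.1
      (fun l => by
        constructor
        · intro h; rwa [len_pres g.2] at h
        · intro h; rw [len_pres g.2]; exact h))
    (by intro g h; apply Equiv.ext; intro v; apply Subtype.ext; rfl)

abbrev HQ (k : ℕ) := _root_.Grigorchuk ⧸ (phi k).ker

def qk (k : ℕ) : ↥Grigorchuk →* HQ k := QuotientGroup.mk' (phi k).ker

instance HQ_finite (k : ℕ) : Finite (HQ k) :=
  Finite.of_equiv _ (QuotientGroup.quotientKerEquivRange (phi k)).symm.toEquiv

theorem mem_ker_phi {k : ℕ} {g : ↥Grigorchuk} :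
    g ∈ (phi k).ker ↔ ∀ l : LB, l.length ≤ k → g.1 l = l := by
  rw [MonoidHom.mem_ker]
  constructor
  · intro h l hl
    have := Equiv.ext_iff.mp h ⟨l, hl⟩
    exact Subtype.ext_iff.mp this
  · intro h
    apply Equiv.ext
    intro v
    exact Subtype.ext (h v.1 v.2)

theorem qk_surj (k : ℕ) : Function.Surjective (qk k) := QuotientGroup.mk'_surjective _

theorem qk_eq_iff {k : ℕ} {g h : ↥Grigorchuk} :
    qk k g = qk k h ↔ ∀ l : LB, l.length ≤ k → g.1 l = h.1 l := by
  unfold qk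
  rw [QuotientGroup.mk'_eq_mk']
  constructor
  · rintro ⟨n, hn, rfl⟩ l hl
    have h2 := (mem_ker_phi.mp hn) l hl
    simp only [Subgroup.coe_mul, Equiv.Perm.mul_apply, h2]
  · intro hgh
    refine ⟨g⁻¹ * h, mem_ker_phi.mpr fun l hl => ?_, by group⟩
    simp only [Subgroup.coe_mul, InvMemClass.coe_inv, Equiv.Perm.mul_apply]
    rw [Equiv.Perm.inv_eq_iff_eq]
    exact (hgh l hl).symm
def words128 : List (List Nat) := [
  [],
  [0],
  [1],
  [2],
  [3],
  [0, 1],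
  [0, 2],
  [0, 3],
  [1, 0],
  [2, 0],
  [3, 0],
  [0, 1, 0],
  [0, 2, 0],
  [0, 3, 0],
  [1, 0, 1],
  [1, 0, 2],
  [1, 0, 3],
  [2, 0, 1],
  [2, 0, 2],
  [2, 0, 3],
  [3, 0, 1],
  [3, 0, 2],
  [3, 0, 3],
  [0, 1, 0, 1],
  [0, 1, 0, 2],
  [0, 1, 0, 3],
  [0, 2, 0, 1],
  [0, 2, 0, 3],
  [0, 3, 0, 1],
  [0, 3, 0, 2],
  [1, 0, 1, 0],
  [1, 0, 2, 0],
  [1, 0, 3, 0],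
  [2, 0, 1, 0],
  [2, 0, 2, 0],
  [2, 0, 3, 0],
  [3, 0, 1, 0],
  [3, 0, 2, 0],
  [3, 0, 3, 0],
  [0, 1, 0, 1, 0],
  [0, 1, 0, 2, 0],
  [0, 1, 0, 3, 0],
  [0, 2, 0, 1, 0],
  [0, 2, 0, 3, 0],
  [0, 3, 0, 1, 0],
  [0, 3, 0, 2, 0],
  [1, 0, 1, 0, 1],
  [1, 0, 1, 0, 2],
  [1, 0, 1, 0, 3],
  [1, 0, 2, 0, 1],
  [1, 0, 3, 0, 1],
  [2, 0, 1, 0, 1],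
  [2, 0, 1, 0, 2],
  [2, 0, 1, 0, 3],
  [2, 0, 3, 0, 1],
  [3, 0, 1, 0, 1],
  [3, 0, 1, 0, 2],
  [3, 0, 1, 0, 3],
  [3, 0, 2, 0, 1],
  [0, 1, 0, 1, 0, 1],
  [0, 1, 0, 1, 0, 2],
  [0, 1, 0, 1, 0, 3],
  [0, 1, 0, 2, 0, 1],
  [0, 1, 0, 3, 0, 1],
  [0, 2, 0, 1, 0, 1],
  [0, 2, 0, 1, 0, 2],
  [0, 2, 0, 3, 0, 1],
  [0, 3, 0, 1, 0, 1],
  [0, 3, 0, 1, 0, 3],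
  [0, 3, 0, 2, 0, 1],
  [1, 0, 1, 0, 1, 0],
  [1, 0, 1, 0, 2, 0],
  [1, 0, 1, 0, 3, 0],
  [1, 0, 2, 0, 1, 0],
  [1, 0, 3, 0, 1, 0],
  [2, 0, 1, 0, 1, 0],
  [2, 0, 1, 0, 2, 0],
  [2, 0, 1, 0, 3, 0],
  [2, 0, 3, 0, 1, 0],
  [3, 0, 1, 0, 1, 0],
  [3, 0, 1, 0, 2, 0],
  [3, 0, 1, 0, 3, 0],
  [3, 0, 2, 0, 1, 0],
  [0, 1, 0, 1, 0, 1, 0],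
  [0, 1, 0, 1, 0, 2, 0],
  [0, 1, 0, 1, 0, 3, 0],
  [0, 1, 0, 2, 0, 1, 0],
  [0, 1, 0, 3, 0, 1, 0],
  [0, 2, 0, 1, 0, 1, 0],
  [0, 2, 0, 1, 0, 2, 0],
  [0, 2, 0, 3, 0, 1, 0],
  [0, 3, 0, 1, 0, 1, 0],
  [0, 3, 0, 1, 0, 3, 0],
  [0, 3, 0, 2, 0, 1, 0],
  [1, 0, 1, 0, 1, 0, 1],
  [1, 0, 1, 0, 1, 0, 2],
  [1, 0, 1, 0, 1, 0, 3],
  [1, 0, 1, 0, 2, 0, 1],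
  [1, 0, 1, 0, 3, 0, 1],
  [1, 0, 2, 0, 1, 0, 1],
  [1, 0, 3, 0, 1, 0, 1],
  [2, 0, 1, 0, 1, 0, 1],
  [2, 0, 1, 0, 1, 0, 2],
  [2, 0, 1, 0, 1, 0, 3],
  [2, 0, 1, 0, 2, 0, 1],
  [2, 0, 3, 0, 1, 0, 1],
  [3, 0, 1, 0, 1, 0, 1],
  [3, 0, 1, 0, 1, 0, 2],
  [3, 0, 1, 0, 1, 0, 3],
  [3, 0, 1, 0, 3, 0, 1],
  [3, 0, 2, 0, 1, 0, 1],
  [1, 0, 1, 0, 1, 0, 1, 0],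
  [1, 0, 1, 0, 1, 0, 2, 0],
  [1, 0, 1, 0, 1, 0, 3, 0],
  [1, 0, 1, 0, 2, 0, 1, 0],
  [1, 0, 1, 0, 3, 0, 1, 0],
  [1, 0, 2, 0, 1, 0, 1, 0],
  [1, 0, 3, 0, 1, 0, 1, 0],
  [2, 0, 1, 0, 1, 0, 1, 0],
  [2, 0, 1, 0, 1, 0, 2, 0],
  [2, 0, 1, 0, 1, 0, 3, 0],
  [2, 0, 1, 0, 2, 0, 1, 0],
  [2, 0, 3, 0, 1, 0, 1, 0],
  [3, 0, 1, 0, 1, 0, 1, 0],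
  [3, 0, 1, 0, 1, 0, 2, 0],
  [3, 0, 1, 0, 1, 0, 3, 0],
  [3, 0, 1, 0, 3, 0, 1, 0],
  [3, 0, 2, 0, 1, 0, 1, 0]]
def codes128 : List Nat := [
  81985529216486895,
  86244892378892715,
  82002022459104495,
  82002022459100655,
  81985529216490735,
  86261385621510315,
  86261385621506475,
  86244892378896555,
  86244957055069065,
  86244956803410825,
  86244892630550955,
  81985593892663245,
  81985593641005005,
  81985529468145135,
  86261450047011465,
  86261450047007625,
  86244957055072905,
  86261450046028425,
  86261450046024585,
  86244956803414665,
  86261385622493355,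
  86261385622489515,
  86244892630554795,
  82002086884605645,
  82002086884601805,
  81985593892667085,
  82002086883622605,
  81985593641008845,
  82002022460087535,
  82002022460083695,
  82002087135277020,
  82002086883618780,
  82002022710762735,
  82002087135277005,
  82002086883618765,
  82002022710758895,
  81985593892663260,
  81985593641005020,
  81985529468148975,
  86261450297682840,
  86261450046024600,
  86261385873168555,
  86261450297682825,
  86261385873164715,
  86244957055069080,
  86244956803410840,
  81985593641991900,
  81985593641988060,
  82002087135280860,
  81985593641008860,
  81985529217469935,
  81985593641991885,
  81985593641988045,
  82002087135280845,
  81985529217473775,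
  82002086884605660,
  82002086884601820,
  81985593892667100,
  82002086883622620,
  86244956804397720,
  86244956804393880,
  86261450297686680,
  86244956803414680,
  86244892379875755,
  86244956804397705,
  86244956804393865,
  86244892379879595,
  86261450047011480,
  86244957055072920,
  86261450046028440,
  86261385874147770,
  86261385622489530,
  86261450298669705,
  86261385874147755,
  86244892378892730,
  86261385873164730,
  86261385621506490,
  86261450297686665,
  86244892630550970,
  86261450298665880,
  86261450047007640,
  86261385874151595,
  86261450298665865,
  82002022711741950,
  82002022460083710,
  82002087136263885,
  82002022711741935,
  81985529216486910,
  82002022710758910,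
  82002022459100670,
  81985529468145150,
  82002087136260060,
  82002022711745775,
  82002087136260045,
  86244892631537850,
  86244892631534010,
  86261385874151610,
  86244892630554810,
  86244957056052105,
  86244892631537835,
  86261385621510330,
  86244892379879610,
  86244892379875770,
  86261385873168570,
  86244892378896570,
  86261385622493370,
  86244957056055960,
  86244957056052120,
  86261450298669720,
  86244892631533995,
  86244957056055945,
  81985529469132030,
  81985529217473790,
  81985593893650140,
  81985529469132015,
  82002022459104510,
  81985529468148990,
  81985593893646285,
  81985529469128190,
  81985529217469950,
  81985593893650125,
  81985529469128175,
  81985593893646300,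
  82002022711745790,
  82002022460087550,
  82002087136263900,
  81985529216490750,
  82002022710762750]
def L3 : List LB := [[], [false], [true], [false, false], [false, true], [true, false],
  [true, true], [false, false, false], [false, false, true], [false, true, false],
  [false, true, true], [true, false, false], [true, false, true], [true, true, false],
  [true, true, true]]

theorem mem_L3 : ∀ l : LB, l.length ≤ 3 → l ∈ L3 := by
  intro l h
  match l with
  | [] => decide
  | [x] => cases x <;> decide
  | [x, y] => cases x <;> cases y <;> decide
  | [x, y, z] => cases x <;> cases y <;> cases z <;> decide
  | x :: y :: z :: w :: t => simp [List.length_cons] at h; omega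

theorem L3_len : ∀ l ∈ L3, l.length ≤ 3 := by decide

def gp : ℕ → Perm LB
  | 0 => aP
  | 1 => bP
  | 2 => cP
  | _ => dP

def wP (w : List ℕ) : Perm LB := (w.map gp).prod

theorem gp_mem (n : ℕ) : gp n ∈ Grigorchuk := by
  match n with
  | 0 => exact aP_mem
  | 1 => exact bP_mem
  | 2 => exact cP_mem
  | (m+3) => exact dP_mem

theorem wP_mem (w : List ℕ) : wP w ∈ Grigorchuk := by
  apply Subgroup.list_prod_mem
  intro x hx
  obtain ⟨n, _, rfl⟩ := List.mem_map.mp hx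
  exact gp_mem n

theorem wP_append (w1 w2 : List ℕ) : wP (w1 ++ w2) = wP w1 * wP w2 := by
  simp [wP]

def wG (w : List ℕ) : ↥Grigorchuk := ⟨wP w, wP_mem w⟩

theorem wG_append (w1 w2 : List ℕ) : wG (w1 ++ w2) = wG w1 * wG w2 :=
  Subtype.ext (wP_append w1 w2)

def wQ (k : ℕ) (w : List ℕ) : HQ k := qk k (wG w)

theorem wQ_append (k : ℕ) (w1 w2 : List ℕ) : wQ k (w1 ++ w2) = wQ k w1 * wQ k w2 := by
  rw [wQ, wG_append, map_mul]; rfl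

theorem wQ3_eq (w1 w2 : List ℕ) (h : ∀ l ∈ L3, wP w1 l = wP w2 l) : wQ 3 w1 = wQ 3 w2 :=
  qk_eq_iff.mpr fun l hl => h l (mem_L3 l hl)

def fp3 : HQ 3 → List LB := fun x =>
  Quotient.liftOn' x (fun g => L3.map g.1) (by
    intro g h hr
    rw [QuotientGroup.leftRel_apply] at hr
    apply List.map_congr_left
    intro l hl
    have hk := mem_ker_phi.mp hr l (L3_len l hl)
    simp only [Subgroup.coe_mul, InvMemClass.coe_inv, Equiv.Perm.mul_apply] at hk
    rw [Equiv.Perm.inv_eq_iff_eq] at hk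
    exact hk.symm)

theorem fp3_wQ (w : List ℕ) : fp3 (wQ 3 w) = L3.map ⇑(wP w) := rfl
def encL (l : LB) : ℕ := l.foldl (fun acc b => 2 * acc + cond b 1 0) 1
def encLL (ls : List LB) : ℕ := ls.foldl (fun acc l => 16 * acc + encL l) 0

def fp3n : HQ 3 → ℕ := fun x => encLL (fp3 x)

set_option maxRecDepth 10000 in
theorem words128_codes : words128.map (fun w => encLL (L3.map ⇑(wP w))) = codes128 := by decide

set_option maxRecDepth 10000 in
theorem codes128_nodup : codes128.Nodup := by decide

theorem card_HQ3_ge : 128 ≤ Nat.card (HQ 3) := by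
  haveI : Fintype (HQ 3) := Fintype.ofFinite _
  have h3 : (words128.map (wQ 3)).map fp3n = words128.map (fun w => encLL (L3.map ⇑(wP w))) := by
    rw [List.map_map]; rfl
  have h1 : (words128.map (wQ 3)).Nodup := by
    apply List.Nodup.of_map fp3n
    rw [h3, words128_codes]
    exact codes128_nodup
  have h4 : (words128.map (wQ 3)).length = 128 := by
    rw [List.length_map]; decide
  calc (128 : ℕ) = (words128.map (wQ 3)).length := h4.symm
    _ ≤ Fintype.card (HQ 3) := List.Nodup.length_le_card h1
    _ = Nat.card (HQ 3) := (Nat.card_eq_fintype_card).symm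
theorem apply_nil (g : ↥Grigorchuk) : g.1 [] = [] := by
  have h := len_pres g.2 ([] : LB)
  exact List.eq_nil_of_length_eq_zero (by simpa using h)

def eBit (g : ↥Grigorchuk) (v : LB) : Bool := (g.1 (v ++ [false])).getLastD false

theorem eBit_spec (g : ↥Grigorchuk) (v : LB) (x : Bool) :
    g.1 (v ++ [x]) = g.1 v ++ [xor x (eBit g v)] := by
  obtain ⟨y, hy⟩ := (mem_TreeG_of_mem g.1 g.2).2 v false
  have he : eBit g v = y := by rw [eBit, hy]; simp
  cases x
  · rw [hy, he]; simp
  · obtain ⟨z, hz⟩ := (mem_TreeG_of_mem g.1 g.2).2 v true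
    have hzy : z ≠ y := by
      intro hzz
      rw [hzz] at hz
      have : v ++ [true] = v ++ [false] := g.1.injective (by rw [hy, hz])
      simpa using this
    have hz2 : z = !y := by cases z <;> cases y <;> simp_all
    rw [hz, he, hz2]; simp

theorem eBit_det {g h : ↥Grigorchuk}
    (hB : ∀ v : LB, v.length ≤ 2 → eBit g v = eBit h v) :
    ∀ l : LB, l.length ≤ 3 → g.1 l = h.1 l := by
  intro l
  induction l using List.reverseRecOn with
  | nil => intro _; rw [apply_nil, apply_nil]
  | append_singleton v x ih =>
    intro hl
    simp only [List.length_append, List.length_cons, List.length_nil] at hl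
    have hv : v.length ≤ 2 := by omega
    rw [eBit_spec, eBit_spec, ih (by omega), hB v hv]

def pfp : HQ 3 → Bool × Bool × Bool × Bool × Bool × Bool × Bool := fun x =>
  Quotient.liftOn' x (fun g => (eBit g [], eBit g [false], eBit g [true], eBit g [false, false],
    eBit g [false, true], eBit g [true, false], eBit g [true, true])) (by
    intro g h hr
    rw [QuotientGroup.leftRel_apply] at hr
    have key : ∀ v : LB, v.length ≤ 2 → eBit g v = eBit h v := by
      intro v hv
      have hk := mem_ker_phi.mp hr (v ++ [false])
        (by simp only [List.length_append, List.length_cons, List.length_nil]; omega)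
      simp only [Subgroup.coe_mul, InvMemClass.coe_inv, Equiv.Perm.mul_apply] at hk
      rw [Equiv.Perm.inv_eq_iff_eq] at hk
      rw [eBit, eBit, hk]
    show (eBit g [], eBit g [false], eBit g [true], eBit g [false, false], eBit g [false, true], eBit g [true, false], eBit g [true, true]) = _
    rw [key [] (by simp), key [false] (by simp), key [true] (by simp),
      key [false, false] (by simp), key [false, true] (by simp), key [true, false] (by simp),
      key [true, true] (by simp)])

theorem pfp_inj : Function.Injective pfp := by
  intro x y
  refine Quotient.inductionOn₂' x y ?_ 
  intro g h hgh
  simp only [pfp, Quotient.liftOn'_mk'', Prod.mk.injEq] at hgh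
  obtain ⟨e1, e2, e3, e4, e5, e6, e7⟩ := hgh
  have key : ∀ v : LB, v.length ≤ 2 → eBit g v = eBit h v := by
    intro v hv
    match v with
    | [] => exact e1
    | [x] => cases x
             · exact e2
             · exact e3
    | [x, y] =>
      cases x <;> cases y
      · exact e4
      · exact e5
      · exact e6
      · exact e7
    | x :: y :: z :: t => simp at hv
  have : qk 3 g = qk 3 h := qk_eq_iff.mpr (eBit_det key)
  exact this

theorem card_HQ3_le : Nat.card (HQ 3) ≤ 128 := by
  have h := Nat.card_le_card_of_injective pfp pfp_inj
  simpa using h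

theorem card_HQ3 : Nat.card (HQ 3) = 128 := le_antisymm card_HQ3_le card_HQ3_ge
section Dihedral

variable {G : Type*} [Group G]

theorem dihedral_card_le (x y : G) (hx : x * x = 1) (hy : y * y = 1)
    (hxy : (x * y) * (x * y) * ((x * y) * (x * y)) = 1) :
    Nat.card (Subgroup.closure ({x, y} : Set G)) ≤ 8 := by
  have hxinv : x⁻¹ = x := by
    rw [inv_eq_iff_mul_eq_one]; exact hx
  have hyinv : y⁻¹ = y := by
    rw [inv_eq_iff_mul_eq_one]; exact hy
  have h4 : (x * y) ^ (4 : ℕ) = 1 := by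
    have h := hxy
    rw [← sq, ← sq, ← pow_mul] at h
    norm_num at h
    exact h
  have hr4 : (x * y) ^ (4 : ℤ) = 1 := by
    rw [show (4:ℤ) = ((4:ℕ):ℤ) by norm_num, zpow_natCast, h4]
  have hsrs : x * (x * y) * x⁻¹ = (x * y)⁻¹ := by
    rw [mul_inv_rev, hxinv, hyinv, ← mul_assoc, hx, one_mul]
  have hconj : ∀ j : ℤ, x * (x * y) ^ j * x⁻¹ = ((x * y) ^ j)⁻¹ := by
    intro j
    calc x * (x * y) ^ j * x⁻¹ = (MulAut.conj x) ((x * y) ^ j) := by rw [MulAut.conj_apply]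
      _ = ((MulAut.conj x) (x * y)) ^ j := map_zpow _ _ _
      _ = (x * (x * y) * x⁻¹) ^ j := by rw [MulAut.conj_apply]
      _ = ((x * y)⁻¹) ^ j := by rw [hsrs]
      _ = ((x * y) ^ j)⁻¹ := by rw [inv_zpow]
  have hsr : ∀ j : ℤ, x * (x * y) ^ j = (x * y) ^ (-j) * x := by
    intro j
    rw [zpow_neg]
    calc x * (x * y) ^ j = (x * (x * y) ^ j * x⁻¹) * x := by group
      _ = ((x * y) ^ j)⁻¹ * x := by rw [hconj j]
  set Sgrp : Subgroup G :=
    { carrier := {g | ∃ i : ℤ, g = (x * y) ^ i ∨ g = (x * y) ^ i * x}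
      one_mem' := ⟨0, Or.inl (by simp)⟩
      mul_mem' := by
        rintro g h ⟨i, rfl | rfl⟩ ⟨j, rfl | rfl⟩
        · exact ⟨i + j, Or.inl (by rw [zpow_add])⟩
        · exact ⟨i + j, Or.inr (by rw [zpow_add, mul_assoc])⟩
        · refine ⟨i - j, Or.inr ?_⟩
          rw [mul_assoc, hsr j, ← mul_assoc, ← zpow_add, ← sub_eq_add_neg]
        · refine ⟨i - j, Or.inl ?_⟩
          rw [mul_assoc, ← mul_assoc x _ _, hsr j, mul_assoc, hx, mul_one,
            ← zpow_add, ← sub_eq_add_neg]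
      inv_mem' := by
        rintro g ⟨i, rfl | rfl⟩
        · exact ⟨-i, Or.inl (by rw [zpow_neg])⟩
        · refine ⟨i, Or.inr ?_⟩
          rw [mul_inv_rev, hxinv, ← zpow_neg, hsr (-i), neg_neg] } with hS
  have hle : Subgroup.closure ({x, y} : Set G) ≤ Sgrp := by
    apply Subgroup.closure_le _ |>.mpr
    rintro g (rfl | rfl)
    · exact ⟨0, Or.inr (by simp)⟩
    · refine ⟨-1, Or.inr ?_⟩
      rw [zpow_neg, zpow_one, mul_inv_rev, hxinv, hyinv, mul_assoc, hx, mul_one]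
  have hmod : ∀ i : ℤ, (x * y) ^ i = (x * y) ^ ((i % 4).toNat) := by
    intro i
    have h0 : 0 ≤ i % 4 := Int.emod_nonneg i (by norm_num)
    have h1 : ((i % 4).toNat : ℤ) = i % 4 := Int.toNat_of_nonneg h0
    rw [← zpow_natCast, h1]
    conv_lhs => rw [← Int.emod_add_mul_ediv i 4]
    rw [zpow_add, zpow_mul, hr4, one_zpow, mul_one]
  have hmem : ∀ p : Fin 4 × Fin 2, (x * y) ^ (p.1 : ℕ) * x ^ (p.2 : ℕ) ∈
      Subgroup.closure ({x, y} : Set G) := by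
    intro p
    have hxm : x ∈ Subgroup.closure ({x, y} : Set G) :=
      Subgroup.subset_closure (by simp)
    have hym : y ∈ Subgroup.closure ({x, y} : Set G) :=
      Subgroup.subset_closure (by simp)
    exact mul_mem (pow_mem (mul_mem hxm hym) _) (pow_mem hxm _)
  have hsurj : Function.Surjective
      (fun p : Fin 4 × Fin 2 => (⟨(x * y) ^ (p.1 : ℕ) * x ^ (p.2 : ℕ), hmem p⟩ :
        ↥(Subgroup.closure ({x, y} : Set G)))) := by
    rintro ⟨g, hg⟩
    obtain ⟨i, hi | hi⟩ := hle hg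
    · have h0 : 0 ≤ i % 4 := Int.emod_nonneg i (by norm_num)
      have h1 : i % 4 < 4 := Int.emod_lt_of_pos i (by norm_num)
      refine ⟨(⟨(i % 4).toNat, by omega⟩, ⟨0, by norm_num⟩), ?_⟩
      apply Subtype.ext
      show (x * y) ^ ((i % 4).toNat) * x ^ (0 : ℕ) = g
      rw [pow_zero, mul_one, ← hmod i, hi]
    · have h0 : 0 ≤ i % 4 := Int.emod_nonneg i (by norm_num)
      have h1 : i % 4 < 4 := Int.emod_lt_of_pos i (by norm_num)
      refine ⟨(⟨(i % 4).toNat, by omega⟩, ⟨1, by norm_num⟩), ?_⟩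
      apply Subtype.ext
      show (x * y) ^ ((i % 4).toNat) * x ^ (1 : ℕ) = g
      rw [pow_one, ← hmod i, hi]
  have := Nat.card_le_card_of_surjective _ hsurj
  simpa using this

end Dihedral
def aG : ↥Grigorchuk := ⟨aP, aP_mem⟩
def bG : ↥Grigorchuk := ⟨bP, bP_mem⟩
def cG : ↥Grigorchuk := ⟨cP, cP_mem⟩
def dG : ↥Grigorchuk := ⟨dP, dP_mem⟩

theorem aG_sq : aG * aG = 1 := Subtype.ext aP_sq
theorem bG_sq : bG * bG = 1 := Subtype.ext bP_sq
theorem cG_sq : cG * cG = 1 := Subtype.ext cP_sq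
theorem dG_sq : dG * dG = 1 := Subtype.ext dP_sq
theorem cG_eq : cG = bG * dG := Subtype.ext cP_eq
theorem adG_pow : (aG * dG) * (aG * dG) * ((aG * dG) * (aG * dG)) = 1 :=
  Subtype.ext adP_pow

theorem top_gen : (⊤ : Subgroup ↥Grigorchuk) = Subgroup.closure {aG, bG, cG, dG} := by
  apply le_antisymm ?_ le_top
  have h : Subgroup.closure (((↑) : ↥Grigorchuk → Perm LB) ⁻¹' ({aP, bP, cP, dP} : Set (Perm LB))) = ⊤ :=
    Subgroup.closure_closure_coe_preimage (k := ({aP, bP, cP, dP} : Set (Perm LB)))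
  rw [← h]
  apply (Subgroup.closure_le _).mpr
  intro g hg
  apply Subgroup.subset_closure
  rcases hg with h1 | h1 | h1 | h1
  · exact Or.inl (Subtype.ext h1)
  · exact Or.inr (Or.inl (Subtype.ext h1))
  · exact Or.inr (Or.inr (Or.inl (Subtype.ext h1)))
  · exact Or.inr (Or.inr (Or.inr (Subtype.ext h1)))

def aQ (k : ℕ) : HQ k := qk k aG
def bQ (k : ℕ) : HQ k := qk k bG
def cQ (k : ℕ) : HQ k := qk k cG
def dQ (k : ℕ) : HQ k := qk k dG

theorem HQ_gen (k : ℕ) : (⊤ : Subgroup (HQ k)) = Subgroup.closure {aQ k, bQ k, cQ k, dQ k} := by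
  have h1 : Subgroup.map (qk k) ⊤ = ⊤ := by
    rw [Subgroup.map_top_of_surjective _ (qk_surj k)]
  rw [← h1, top_gen, MonoidHom.map_closure]
  congr 1
  rw [Set.image_insert_eq, Set.image_insert_eq, Set.image_insert_eq, Set.image_singleton]
  rfl

theorem aQ_sq (k : ℕ) : aQ k * aQ k = 1 := by
  rw [aQ, ← map_mul, aG_sq, map_one]
theorem bQ_sq (k : ℕ) : bQ k * bQ k = 1 := by
  rw [bQ, ← map_mul, bG_sq, map_one]
theorem cQ_sq (k : ℕ) : cQ k * cQ k = 1 := by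
  rw [cQ, ← map_mul, cG_sq, map_one]
theorem dQ_sq (k : ℕ) : dQ k * dQ k = 1 := by
  rw [dQ, ← map_mul, dG_sq, map_one]
theorem cQ_eq (k : ℕ) : cQ k = bQ k * dQ k := by
  rw [cQ, bQ, dQ, ← map_mul, ← cG_eq]
theorem adQ_pow (k : ℕ) :
    (aQ k * dQ k) * (aQ k * dQ k) * ((aQ k * dQ k) * (aQ k * dQ k)) = 1 := by
  rw [aQ, dQ]
  simp only [← map_mul]
  rw [adG_pow, map_one]

/-- The level-k image of the normal closure of b. -/
def Bk (k : ℕ) : Subgroup (HQ k) := Subgroup.normalClosure {bQ k}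

instance Bk_normal (k : ℕ) : (Bk k).Normal := Subgroup.normalClosure_normal

abbrev Qk (k : ℕ) := HQ k ⧸ Bk k

def qq (k : ℕ) : HQ k →* Qk k := QuotientGroup.mk' (Bk k)

theorem qq_surj (k : ℕ) : Function.Surjective (qq k) := QuotientGroup.mk'_surjective _

theorem qq_b (k : ℕ) : qq k (bQ k) = 1 := by
  rw [qq, QuotientGroup.mk'_apply, QuotientGroup.eq_one_iff]
  exact Subgroup.subset_normalClosure rfl

theorem qq_c (k : ℕ) : qq k (cQ k) = qq k (dQ k) := by
  rw [cQ_eq, map_mul, qq_b, one_mul]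

theorem Qk_gen (k : ℕ) : (⊤ : Subgroup (Qk k)) =
    Subgroup.closure {qq k (aQ k), qq k (dQ k)} := by
  apply le_antisymm ?_ le_top
  have h1 : Subgroup.map (qq k) ⊤ = ⊤ := by
    rw [Subgroup.map_top_of_surjective _ (qq_surj k)]
  rw [← h1, HQ_gen k, MonoidHom.map_closure]
  apply (Subgroup.closure_le _).mpr
  intro g hg
  rcases hg with ⟨u, hu, rfl⟩
  rcases hu with h1 | h1 | h1 | h1 <;> subst h1
  · exact Subgroup.subset_closure (Or.inl rfl)
  · rw [qq_b]; exact one_mem _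
  · rw [qq_c]; exact Subgroup.subset_closure (Or.inr rfl)
  · exact Subgroup.subset_closure (Or.inr rfl)

theorem card_Qk_le (k : ℕ) : Nat.card (Qk k) ≤ 8 := by
  have h := dihedral_card_le (qq k (aQ k)) (qq k (dQ k))
    (by rw [← map_mul, aQ_sq, map_one])
    (by rw [← map_mul, dQ_sq, map_one])
    (by
      simp only [← map_mul]
      rw [adQ_pow k, map_one])
  rw [← Qk_gen k] at h
  calc Nat.card (Qk k) = Nat.card (⊤ : Subgroup (Qk k)) :=
        (Nat.card_congr Subgroup.topEquiv.toEquiv).symm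
    _ ≤ 8 := h

/-- Restriction homomorphism between levels. -/
def resk (k j : ℕ) (h : j ≤ k) : HQ k →* HQ j :=
  QuotientGroup.map _ _ (MonoidHom.id _) (by
    intro g hg
    rw [Subgroup.mem_comap]
    exact mem_ker_phi.mpr fun l hl => mem_ker_phi.mp hg l (le_trans hl h))

theorem resk_qk (k j : ℕ) (h : j ≤ k) (g : ↥Grigorchuk) :
    resk k j h (qk k g) = qk j g := rfl

theorem resk_surj (k j : ℕ) (h : j ≤ k) : Function.Surjective (resk k j h) := by
  intro x
  obtain ⟨g, rfl⟩ := qk_surj j x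
  exact ⟨qk k g, rfl⟩

def EwL : List (List ℕ) := [
  [],
  [0, 1, 0],
  [0, 1, 0, 1],
  [0, 1, 0, 1, 0, 1, 0],
  [0, 2, 0, 1, 0, 2, 0],
  [0, 3, 0, 1, 0, 3, 0],
  [1],
  [1, 0, 1, 0],
  [1, 0, 1, 0, 1],
  [1, 0, 1, 0, 1, 0, 1, 0],
  [2, 0, 1, 0, 2],
  [2, 0, 1, 0, 2, 0, 1, 0],
  [2, 0, 1, 0, 3],
  [3, 0, 1, 0, 2],
  [3, 0, 1, 0, 3],
  [3, 0, 1, 0, 3, 0, 1, 0]]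

def Ew (i : Fin 16) : List ℕ := EwL.get (Fin.cast (by rfl) i)

def eH (i : Fin 16) : HQ 3 := wQ 3 (Ew i)

theorem wQ_nil : wQ 3 ([] : List ℕ) = 1 := by
  rw [wQ, show wG [] = 1 from rfl, map_one]

theorem key : ∀ u v m : List ℕ, (∀ l ∈ L3, wP (u ++ v) l = wP m l) →
    wQ 3 u * wQ 3 v = wQ 3 m :=
  fun u v m h => (wQ_append 3 u v).symm.trans (wQ3_eq _ _ h)

theorem key4 : ∀ u v m : List ℕ, (∀ l ∈ L3, wP ((u ++ v) ++ u) l = wP m l) →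
    wQ 3 u * wQ 3 v * wQ 3 u = wQ 3 m := by
  intro u v m h
  rw [← wQ_append, ← wQ_append]
  exact wQ3_eq _ _ h

set_option maxHeartbeats 2000000 in
theorem eH_mul (i j : Fin 16) : ∃ m : Fin 16, eH i * eH j = eH m := by
  match i, j with
  | ⟨0, _⟩, ⟨0, _⟩ => exact ⟨0, key (Ew 0) (Ew 0) (Ew 0) (by decide)⟩
  | ⟨0, _⟩, ⟨1, _⟩ => exact ⟨1, key (Ew 0) (Ew 1) (Ew 1) (by decide)⟩
  | ⟨0, _⟩, ⟨2, _⟩ => exact ⟨2, key (Ew 0) (Ew 2) (Ew 2) (by decide)⟩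
  | ⟨0, _⟩, ⟨3, _⟩ => exact ⟨3, key (Ew 0) (Ew 3) (Ew 3) (by decide)⟩
  | ⟨0, _⟩, ⟨4, _⟩ => exact ⟨4, key (Ew 0) (Ew 4) (Ew 4) (by decide)⟩
  | ⟨0, _⟩, ⟨5, _⟩ => exact ⟨5, key (Ew 0) (Ew 5) (Ew 5) (by decide)⟩
  | ⟨0, _⟩, ⟨6, _⟩ => exact ⟨6, key (Ew 0) (Ew 6) (Ew 6) (by decide)⟩
  | ⟨0, _⟩, ⟨7, _⟩ => exact ⟨7, key (Ew 0) (Ew 7) (Ew 7) (by decide)⟩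
  | ⟨0, _⟩, ⟨8, _⟩ => exact ⟨8, key (Ew 0) (Ew 8) (Ew 8) (by decide)⟩
  | ⟨0, _⟩, ⟨9, _⟩ => exact ⟨9, key (Ew 0) (Ew 9) (Ew 9) (by decide)⟩
  | ⟨0, _⟩, ⟨10, _⟩ => exact ⟨10, key (Ew 0) (Ew 10) (Ew 10) (by decide)⟩
  | ⟨0, _⟩, ⟨11, _⟩ => exact ⟨11, key (Ew 0) (Ew 11) (Ew 11) (by decide)⟩
  | ⟨0, _⟩, ⟨12, _⟩ => exact ⟨12, key (Ew 0) (Ew 12) (Ew 12) (by decide)⟩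
  | ⟨0, _⟩, ⟨13, _⟩ => exact ⟨13, key (Ew 0) (Ew 13) (Ew 13) (by decide)⟩
  | ⟨0, _⟩, ⟨14, _⟩ => exact ⟨14, key (Ew 0) (Ew 14) (Ew 14) (by decide)⟩
  | ⟨0, _⟩, ⟨15, _⟩ => exact ⟨15, key (Ew 0) (Ew 15) (Ew 15) (by decide)⟩
  | ⟨1, _⟩, ⟨0, _⟩ => exact ⟨1, key (Ew 1) (Ew 0) (Ew 1) (by decide)⟩
  | ⟨1, _⟩, ⟨1, _⟩ => exact ⟨0, key (Ew 1) (Ew 1) (Ew 0) (by decide)⟩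
  | ⟨1, _⟩, ⟨2, _⟩ => exact ⟨6, key (Ew 1) (Ew 2) (Ew 6) (by decide)⟩
  | ⟨1, _⟩, ⟨3, _⟩ => exact ⟨7, key (Ew 1) (Ew 3) (Ew 7) (by decide)⟩
  | ⟨1, _⟩, ⟨4, _⟩ => exact ⟨13, key (Ew 1) (Ew 4) (Ew 13) (by decide)⟩
  | ⟨1, _⟩, ⟨5, _⟩ => exact ⟨12, key (Ew 1) (Ew 5) (Ew 12) (by decide)⟩
  | ⟨1, _⟩, ⟨6, _⟩ => exact ⟨2, key (Ew 1) (Ew 6) (Ew 2) (by decide)⟩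
  | ⟨1, _⟩, ⟨7, _⟩ => exact ⟨3, key (Ew 1) (Ew 7) (Ew 3) (by decide)⟩
  | ⟨1, _⟩, ⟨8, _⟩ => exact ⟨9, key (Ew 1) (Ew 8) (Ew 9) (by decide)⟩
  | ⟨1, _⟩, ⟨9, _⟩ => exact ⟨8, key (Ew 1) (Ew 9) (Ew 8) (by decide)⟩
  | ⟨1, _⟩, ⟨10, _⟩ => exact ⟨11, key (Ew 1) (Ew 10) (Ew 11) (by decide)⟩
  | ⟨1, _⟩, ⟨11, _⟩ => exact ⟨10, key (Ew 1) (Ew 11) (Ew 10) (by decide)⟩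
  | ⟨1, _⟩, ⟨12, _⟩ => exact ⟨5, key (Ew 1) (Ew 12) (Ew 5) (by decide)⟩
  | ⟨1, _⟩, ⟨13, _⟩ => exact ⟨4, key (Ew 1) (Ew 13) (Ew 4) (by decide)⟩
  | ⟨1, _⟩, ⟨14, _⟩ => exact ⟨15, key (Ew 1) (Ew 14) (Ew 15) (by decide)⟩
  | ⟨1, _⟩, ⟨15, _⟩ => exact ⟨14, key (Ew 1) (Ew 15) (Ew 14) (by decide)⟩
  | ⟨2, _⟩, ⟨0, _⟩ => exact ⟨2, key (Ew 2) (Ew 0) (Ew 2) (by decide)⟩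
  | ⟨2, _⟩, ⟨1, _⟩ => exact ⟨3, key (Ew 2) (Ew 1) (Ew 3) (by decide)⟩
  | ⟨2, _⟩, ⟨2, _⟩ => exact ⟨9, key (Ew 2) (Ew 2) (Ew 9) (by decide)⟩
  | ⟨2, _⟩, ⟨3, _⟩ => exact ⟨8, key (Ew 2) (Ew 3) (Ew 8) (by decide)⟩
  | ⟨2, _⟩, ⟨4, _⟩ => exact ⟨14, key (Ew 2) (Ew 4) (Ew 14) (by decide)⟩
  | ⟨2, _⟩, ⟨5, _⟩ => exact ⟨10, key (Ew 2) (Ew 5) (Ew 10) (by decide)⟩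
  | ⟨2, _⟩, ⟨6, _⟩ => exact ⟨1, key (Ew 2) (Ew 6) (Ew 1) (by decide)⟩
  | ⟨2, _⟩, ⟨7, _⟩ => exact ⟨0, key (Ew 2) (Ew 7) (Ew 0) (by decide)⟩
  | ⟨2, _⟩, ⟨8, _⟩ => exact ⟨6, key (Ew 2) (Ew 8) (Ew 6) (by decide)⟩
  | ⟨2, _⟩, ⟨9, _⟩ => exact ⟨7, key (Ew 2) (Ew 9) (Ew 7) (by decide)⟩
  | ⟨2, _⟩, ⟨10, _⟩ => exact ⟨4, key (Ew 2) (Ew 10) (Ew 4) (by decide)⟩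
  | ⟨2, _⟩, ⟨11, _⟩ => exact ⟨12, key (Ew 2) (Ew 11) (Ew 12) (by decide)⟩
  | ⟨2, _⟩, ⟨12, _⟩ => exact ⟨15, key (Ew 2) (Ew 12) (Ew 15) (by decide)⟩
  | ⟨2, _⟩, ⟨13, _⟩ => exact ⟨11, key (Ew 2) (Ew 13) (Ew 11) (by decide)⟩
  | ⟨2, _⟩, ⟨14, _⟩ => exact ⟨5, key (Ew 2) (Ew 14) (Ew 5) (by decide)⟩
  | ⟨2, _⟩, ⟨15, _⟩ => exact ⟨13, key (Ew 2) (Ew 15) (Ew 13) (by decide)⟩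
  | ⟨3, _⟩, ⟨0, _⟩ => exact ⟨3, key (Ew 3) (Ew 0) (Ew 3) (by decide)⟩
  | ⟨3, _⟩, ⟨1, _⟩ => exact ⟨2, key (Ew 3) (Ew 1) (Ew 2) (by decide)⟩
  | ⟨3, _⟩, ⟨2, _⟩ => exact ⟨1, key (Ew 3) (Ew 2) (Ew 1) (by decide)⟩
  | ⟨3, _⟩, ⟨3, _⟩ => exact ⟨0, key (Ew 3) (Ew 3) (Ew 0) (by decide)⟩
  | ⟨3, _⟩, ⟨4, _⟩ => exact ⟨11, key (Ew 3) (Ew 4) (Ew 11) (by decide)⟩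
  | ⟨3, _⟩, ⟨5, _⟩ => exact ⟨15, key (Ew 3) (Ew 5) (Ew 15) (by decide)⟩
  | ⟨3, _⟩, ⟨6, _⟩ => exact ⟨9, key (Ew 3) (Ew 6) (Ew 9) (by decide)⟩
  | ⟨3, _⟩, ⟨7, _⟩ => exact ⟨8, key (Ew 3) (Ew 7) (Ew 8) (by decide)⟩
  | ⟨3, _⟩, ⟨8, _⟩ => exact ⟨7, key (Ew 3) (Ew 8) (Ew 7) (by decide)⟩
  | ⟨3, _⟩, ⟨9, _⟩ => exact ⟨6, key (Ew 3) (Ew 9) (Ew 6) (by decide)⟩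
  | ⟨3, _⟩, ⟨10, _⟩ => exact ⟨12, key (Ew 3) (Ew 10) (Ew 12) (by decide)⟩
  | ⟨3, _⟩, ⟨11, _⟩ => exact ⟨4, key (Ew 3) (Ew 11) (Ew 4) (by decide)⟩
  | ⟨3, _⟩, ⟨12, _⟩ => exact ⟨10, key (Ew 3) (Ew 12) (Ew 10) (by decide)⟩
  | ⟨3, _⟩, ⟨13, _⟩ => exact ⟨14, key (Ew 3) (Ew 13) (Ew 14) (by decide)⟩
  | ⟨3, _⟩, ⟨14, _⟩ => exact ⟨13, key (Ew 3) (Ew 14) (Ew 13) (by decide)⟩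
  | ⟨3, _⟩, ⟨15, _⟩ => exact ⟨5, key (Ew 3) (Ew 15) (Ew 5) (by decide)⟩
  | ⟨4, _⟩, ⟨0, _⟩ => exact ⟨4, key (Ew 4) (Ew 0) (Ew 4) (by decide)⟩
  | ⟨4, _⟩, ⟨1, _⟩ => exact ⟨12, key (Ew 4) (Ew 1) (Ew 12) (by decide)⟩
  | ⟨4, _⟩, ⟨2, _⟩ => exact ⟨10, key (Ew 4) (Ew 2) (Ew 10) (by decide)⟩
  | ⟨4, _⟩, ⟨3, _⟩ => exact ⟨11, key (Ew 4) (Ew 3) (Ew 11) (by decide)⟩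
  | ⟨4, _⟩, ⟨4, _⟩ => exact ⟨0, key (Ew 4) (Ew 4) (Ew 0) (by decide)⟩
  | ⟨4, _⟩, ⟨5, _⟩ => exact ⟨9, key (Ew 4) (Ew 5) (Ew 9) (by decide)⟩
  | ⟨4, _⟩, ⟨6, _⟩ => exact ⟨15, key (Ew 4) (Ew 6) (Ew 15) (by decide)⟩
  | ⟨4, _⟩, ⟨7, _⟩ => exact ⟨14, key (Ew 4) (Ew 7) (Ew 14) (by decide)⟩
  | ⟨4, _⟩, ⟨8, _⟩ => exact ⟨13, key (Ew 4) (Ew 8) (Ew 13) (by decide)⟩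
  | ⟨4, _⟩, ⟨9, _⟩ => exact ⟨5, key (Ew 4) (Ew 9) (Ew 5) (by decide)⟩
  | ⟨4, _⟩, ⟨10, _⟩ => exact ⟨2, key (Ew 4) (Ew 10) (Ew 2) (by decide)⟩
  | ⟨4, _⟩, ⟨11, _⟩ => exact ⟨3, key (Ew 4) (Ew 11) (Ew 3) (by decide)⟩
  | ⟨4, _⟩, ⟨12, _⟩ => exact ⟨1, key (Ew 4) (Ew 12) (Ew 1) (by decide)⟩
  | ⟨4, _⟩, ⟨13, _⟩ => exact ⟨8, key (Ew 4) (Ew 13) (Ew 8) (by decide)⟩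
  | ⟨4, _⟩, ⟨14, _⟩ => exact ⟨7, key (Ew 4) (Ew 14) (Ew 7) (by decide)⟩
  | ⟨4, _⟩, ⟨15, _⟩ => exact ⟨6, key (Ew 4) (Ew 15) (Ew 6) (by decide)⟩
  | ⟨5, _⟩, ⟨0, _⟩ => exact ⟨5, key (Ew 5) (Ew 0) (Ew 5) (by decide)⟩
  | ⟨5, _⟩, ⟨1, _⟩ => exact ⟨13, key (Ew 5) (Ew 1) (Ew 13) (by decide)⟩
  | ⟨5, _⟩, ⟨2, _⟩ => exact ⟨14, key (Ew 5) (Ew 2) (Ew 14) (by decide)⟩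
  | ⟨5, _⟩, ⟨3, _⟩ => exact ⟨15, key (Ew 5) (Ew 3) (Ew 15) (by decide)⟩
  | ⟨5, _⟩, ⟨4, _⟩ => exact ⟨9, key (Ew 5) (Ew 4) (Ew 9) (by decide)⟩
  | ⟨5, _⟩, ⟨5, _⟩ => exact ⟨0, key (Ew 5) (Ew 5) (Ew 0) (by decide)⟩
  | ⟨5, _⟩, ⟨6, _⟩ => exact ⟨11, key (Ew 5) (Ew 6) (Ew 11) (by decide)⟩
  | ⟨5, _⟩, ⟨7, _⟩ => exact ⟨10, key (Ew 5) (Ew 7) (Ew 10) (by decide)⟩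
  | ⟨5, _⟩, ⟨8, _⟩ => exact ⟨12, key (Ew 5) (Ew 8) (Ew 12) (by decide)⟩
  | ⟨5, _⟩, ⟨9, _⟩ => exact ⟨4, key (Ew 5) (Ew 9) (Ew 4) (by decide)⟩
  | ⟨5, _⟩, ⟨10, _⟩ => exact ⟨7, key (Ew 5) (Ew 10) (Ew 7) (by decide)⟩
  | ⟨5, _⟩, ⟨11, _⟩ => exact ⟨6, key (Ew 5) (Ew 11) (Ew 6) (by decide)⟩
  | ⟨5, _⟩, ⟨12, _⟩ => exact ⟨8, key (Ew 5) (Ew 12) (Ew 8) (by decide)⟩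
  | ⟨5, _⟩, ⟨13, _⟩ => exact ⟨1, key (Ew 5) (Ew 13) (Ew 1) (by decide)⟩
  | ⟨5, _⟩, ⟨14, _⟩ => exact ⟨2, key (Ew 5) (Ew 14) (Ew 2) (by decide)⟩
  | ⟨5, _⟩, ⟨15, _⟩ => exact ⟨3, key (Ew 5) (Ew 15) (Ew 3) (by decide)⟩
  | ⟨6, _⟩, ⟨0, _⟩ => exact ⟨6, key (Ew 6) (Ew 0) (Ew 6) (by decide)⟩
  | ⟨6, _⟩, ⟨1, _⟩ => exact ⟨7, key (Ew 6) (Ew 1) (Ew 7) (by decide)⟩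
  | ⟨6, _⟩, ⟨2, _⟩ => exact ⟨8, key (Ew 6) (Ew 2) (Ew 8) (by decide)⟩
  | ⟨6, _⟩, ⟨3, _⟩ => exact ⟨9, key (Ew 6) (Ew 3) (Ew 9) (by decide)⟩
  | ⟨6, _⟩, ⟨4, _⟩ => exact ⟨15, key (Ew 6) (Ew 4) (Ew 15) (by decide)⟩
  | ⟨6, _⟩, ⟨5, _⟩ => exact ⟨11, key (Ew 6) (Ew 5) (Ew 11) (by decide)⟩
  | ⟨6, _⟩, ⟨6, _⟩ => exact ⟨0, key (Ew 6) (Ew 6) (Ew 0) (by decide)⟩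
  | ⟨6, _⟩, ⟨7, _⟩ => exact ⟨1, key (Ew 6) (Ew 7) (Ew 1) (by decide)⟩
  | ⟨6, _⟩, ⟨8, _⟩ => exact ⟨2, key (Ew 6) (Ew 8) (Ew 2) (by decide)⟩
  | ⟨6, _⟩, ⟨9, _⟩ => exact ⟨3, key (Ew 6) (Ew 9) (Ew 3) (by decide)⟩
  | ⟨6, _⟩, ⟨10, _⟩ => exact ⟨13, key (Ew 6) (Ew 10) (Ew 13) (by decide)⟩
  | ⟨6, _⟩, ⟨11, _⟩ => exact ⟨5, key (Ew 6) (Ew 11) (Ew 5) (by decide)⟩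
  | ⟨6, _⟩, ⟨12, _⟩ => exact ⟨14, key (Ew 6) (Ew 12) (Ew 14) (by decide)⟩
  | ⟨6, _⟩, ⟨13, _⟩ => exact ⟨10, key (Ew 6) (Ew 13) (Ew 10) (by decide)⟩
  | ⟨6, _⟩, ⟨14, _⟩ => exact ⟨12, key (Ew 6) (Ew 14) (Ew 12) (by decide)⟩
  | ⟨6, _⟩, ⟨15, _⟩ => exact ⟨4, key (Ew 6) (Ew 15) (Ew 4) (by decide)⟩
  | ⟨7, _⟩, ⟨0, _⟩ => exact ⟨7, key (Ew 7) (Ew 0) (Ew 7) (by decide)⟩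
  | ⟨7, _⟩, ⟨1, _⟩ => exact ⟨6, key (Ew 7) (Ew 1) (Ew 6) (by decide)⟩
  | ⟨7, _⟩, ⟨2, _⟩ => exact ⟨0, key (Ew 7) (Ew 2) (Ew 0) (by decide)⟩
  | ⟨7, _⟩, ⟨3, _⟩ => exact ⟨1, key (Ew 7) (Ew 3) (Ew 1) (by decide)⟩
  | ⟨7, _⟩, ⟨4, _⟩ => exact ⟨10, key (Ew 7) (Ew 4) (Ew 10) (by decide)⟩
  | ⟨7, _⟩, ⟨5, _⟩ => exact ⟨14, key (Ew 7) (Ew 5) (Ew 14) (by decide)⟩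
  | ⟨7, _⟩, ⟨6, _⟩ => exact ⟨8, key (Ew 7) (Ew 6) (Ew 8) (by decide)⟩
  | ⟨7, _⟩, ⟨7, _⟩ => exact ⟨9, key (Ew 7) (Ew 7) (Ew 9) (by decide)⟩
  | ⟨7, _⟩, ⟨8, _⟩ => exact ⟨3, key (Ew 7) (Ew 8) (Ew 3) (by decide)⟩
  | ⟨7, _⟩, ⟨9, _⟩ => exact ⟨2, key (Ew 7) (Ew 9) (Ew 2) (by decide)⟩
  | ⟨7, _⟩, ⟨10, _⟩ => exact ⟨5, key (Ew 7) (Ew 10) (Ew 5) (by decide)⟩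
  | ⟨7, _⟩, ⟨11, _⟩ => exact ⟨13, key (Ew 7) (Ew 11) (Ew 13) (by decide)⟩
  | ⟨7, _⟩, ⟨12, _⟩ => exact ⟨11, key (Ew 7) (Ew 12) (Ew 11) (by decide)⟩
  | ⟨7, _⟩, ⟨13, _⟩ => exact ⟨15, key (Ew 7) (Ew 13) (Ew 15) (by decide)⟩
  | ⟨7, _⟩, ⟨14, _⟩ => exact ⟨4, key (Ew 7) (Ew 14) (Ew 4) (by decide)⟩
  | ⟨7, _⟩, ⟨15, _⟩ => exact ⟨12, key (Ew 7) (Ew 15) (Ew 12) (by decide)⟩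
  | ⟨8, _⟩, ⟨0, _⟩ => exact ⟨8, key (Ew 8) (Ew 0) (Ew 8) (by decide)⟩
  | ⟨8, _⟩, ⟨1, _⟩ => exact ⟨9, key (Ew 8) (Ew 1) (Ew 9) (by decide)⟩
  | ⟨8, _⟩, ⟨2, _⟩ => exact ⟨3, key (Ew 8) (Ew 2) (Ew 3) (by decide)⟩
  | ⟨8, _⟩, ⟨3, _⟩ => exact ⟨2, key (Ew 8) (Ew 3) (Ew 2) (by decide)⟩
  | ⟨8, _⟩, ⟨4, _⟩ => exact ⟨12, key (Ew 8) (Ew 4) (Ew 12) (by decide)⟩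
  | ⟨8, _⟩, ⟨5, _⟩ => exact ⟨13, key (Ew 8) (Ew 5) (Ew 13) (by decide)⟩
  | ⟨8, _⟩, ⟨6, _⟩ => exact ⟨7, key (Ew 8) (Ew 6) (Ew 7) (by decide)⟩
  | ⟨8, _⟩, ⟨7, _⟩ => exact ⟨6, key (Ew 8) (Ew 7) (Ew 6) (by decide)⟩
  | ⟨8, _⟩, ⟨8, _⟩ => exact ⟨0, key (Ew 8) (Ew 8) (Ew 0) (by decide)⟩
  | ⟨8, _⟩, ⟨9, _⟩ => exact ⟨1, key (Ew 8) (Ew 9) (Ew 1) (by decide)⟩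
  | ⟨8, _⟩, ⟨10, _⟩ => exact ⟨15, key (Ew 8) (Ew 10) (Ew 15) (by decide)⟩
  | ⟨8, _⟩, ⟨11, _⟩ => exact ⟨14, key (Ew 8) (Ew 11) (Ew 14) (by decide)⟩
  | ⟨8, _⟩, ⟨12, _⟩ => exact ⟨4, key (Ew 8) (Ew 12) (Ew 4) (by decide)⟩
  | ⟨8, _⟩, ⟨13, _⟩ => exact ⟨5, key (Ew 8) (Ew 13) (Ew 5) (by decide)⟩
  | ⟨8, _⟩, ⟨14, _⟩ => exact ⟨11, key (Ew 8) (Ew 14) (Ew 11) (by decide)⟩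
  | ⟨8, _⟩, ⟨15, _⟩ => exact ⟨10, key (Ew 8) (Ew 15) (Ew 10) (by decide)⟩
  | ⟨9, _⟩, ⟨0, _⟩ => exact ⟨9, key (Ew 9) (Ew 0) (Ew 9) (by decide)⟩
  | ⟨9, _⟩, ⟨1, _⟩ => exact ⟨8, key (Ew 9) (Ew 1) (Ew 8) (by decide)⟩
  | ⟨9, _⟩, ⟨2, _⟩ => exact ⟨7, key (Ew 9) (Ew 2) (Ew 7) (by decide)⟩
  | ⟨9, _⟩, ⟨3, _⟩ => exact ⟨6, key (Ew 9) (Ew 3) (Ew 6) (by decide)⟩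
  | ⟨9, _⟩, ⟨4, _⟩ => exact ⟨5, key (Ew 9) (Ew 4) (Ew 5) (by decide)⟩
  | ⟨9, _⟩, ⟨5, _⟩ => exact ⟨4, key (Ew 9) (Ew 5) (Ew 4) (by decide)⟩
  | ⟨9, _⟩, ⟨6, _⟩ => exact ⟨3, key (Ew 9) (Ew 6) (Ew 3) (by decide)⟩
  | ⟨9, _⟩, ⟨7, _⟩ => exact ⟨2, key (Ew 9) (Ew 7) (Ew 2) (by decide)⟩
  | ⟨9, _⟩, ⟨8, _⟩ => exact ⟨1, key (Ew 9) (Ew 8) (Ew 1) (by decide)⟩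
  | ⟨9, _⟩, ⟨9, _⟩ => exact ⟨0, key (Ew 9) (Ew 9) (Ew 0) (by decide)⟩
  | ⟨9, _⟩, ⟨10, _⟩ => exact ⟨14, key (Ew 9) (Ew 10) (Ew 14) (by decide)⟩
  | ⟨9, _⟩, ⟨11, _⟩ => exact ⟨15, key (Ew 9) (Ew 11) (Ew 15) (by decide)⟩
  | ⟨9, _⟩, ⟨12, _⟩ => exact ⟨13, key (Ew 9) (Ew 12) (Ew 13) (by decide)⟩
  | ⟨9, _⟩, ⟨13, _⟩ => exact ⟨12, key (Ew 9) (Ew 13) (Ew 12) (by decide)⟩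
  | ⟨9, _⟩, ⟨14, _⟩ => exact ⟨10, key (Ew 9) (Ew 14) (Ew 10) (by decide)⟩
  | ⟨9, _⟩, ⟨15, _⟩ => exact ⟨11, key (Ew 9) (Ew 15) (Ew 11) (by decide)⟩
  | ⟨10, _⟩, ⟨0, _⟩ => exact ⟨10, key (Ew 10) (Ew 0) (Ew 10) (by decide)⟩
  | ⟨10, _⟩, ⟨1, _⟩ => exact ⟨11, key (Ew 10) (Ew 1) (Ew 11) (by decide)⟩
  | ⟨10, _⟩, ⟨2, _⟩ => exact ⟨5, key (Ew 10) (Ew 2) (Ew 5) (by decide)⟩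
  | ⟨10, _⟩, ⟨3, _⟩ => exact ⟨13, key (Ew 10) (Ew 3) (Ew 13) (by decide)⟩
  | ⟨10, _⟩, ⟨4, _⟩ => exact ⟨7, key (Ew 10) (Ew 4) (Ew 7) (by decide)⟩
  | ⟨10, _⟩, ⟨5, _⟩ => exact ⟨2, key (Ew 10) (Ew 5) (Ew 2) (by decide)⟩
  | ⟨10, _⟩, ⟨6, _⟩ => exact ⟨12, key (Ew 10) (Ew 6) (Ew 12) (by decide)⟩
  | ⟨10, _⟩, ⟨7, _⟩ => exact ⟨4, key (Ew 10) (Ew 7) (Ew 4) (by decide)⟩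
  | ⟨10, _⟩, ⟨8, _⟩ => exact ⟨15, key (Ew 10) (Ew 8) (Ew 15) (by decide)⟩
  | ⟨10, _⟩, ⟨9, _⟩ => exact ⟨14, key (Ew 10) (Ew 9) (Ew 14) (by decide)⟩
  | ⟨10, _⟩, ⟨10, _⟩ => exact ⟨0, key (Ew 10) (Ew 10) (Ew 0) (by decide)⟩
  | ⟨10, _⟩, ⟨11, _⟩ => exact ⟨1, key (Ew 10) (Ew 11) (Ew 1) (by decide)⟩
  | ⟨10, _⟩, ⟨12, _⟩ => exact ⟨6, key (Ew 10) (Ew 12) (Ew 6) (by decide)⟩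
  | ⟨10, _⟩, ⟨13, _⟩ => exact ⟨3, key (Ew 10) (Ew 13) (Ew 3) (by decide)⟩
  | ⟨10, _⟩, ⟨14, _⟩ => exact ⟨9, key (Ew 10) (Ew 14) (Ew 9) (by decide)⟩
  | ⟨10, _⟩, ⟨15, _⟩ => exact ⟨8, key (Ew 10) (Ew 15) (Ew 8) (by decide)⟩
  | ⟨11, _⟩, ⟨0, _⟩ => exact ⟨11, key (Ew 11) (Ew 0) (Ew 11) (by decide)⟩
  | ⟨11, _⟩, ⟨1, _⟩ => exact ⟨10, key (Ew 11) (Ew 1) (Ew 10) (by decide)⟩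
  | ⟨11, _⟩, ⟨2, _⟩ => exact ⟨12, key (Ew 11) (Ew 2) (Ew 12) (by decide)⟩
  | ⟨11, _⟩, ⟨3, _⟩ => exact ⟨4, key (Ew 11) (Ew 3) (Ew 4) (by decide)⟩
  | ⟨11, _⟩, ⟨4, _⟩ => exact ⟨3, key (Ew 11) (Ew 4) (Ew 3) (by decide)⟩
  | ⟨11, _⟩, ⟨5, _⟩ => exact ⟨6, key (Ew 11) (Ew 5) (Ew 6) (by decide)⟩
  | ⟨11, _⟩, ⟨6, _⟩ => exact ⟨5, key (Ew 11) (Ew 6) (Ew 5) (by decide)⟩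
  | ⟨11, _⟩, ⟨7, _⟩ => exact ⟨13, key (Ew 11) (Ew 7) (Ew 13) (by decide)⟩
  | ⟨11, _⟩, ⟨8, _⟩ => exact ⟨14, key (Ew 11) (Ew 8) (Ew 14) (by decide)⟩
  | ⟨11, _⟩, ⟨9, _⟩ => exact ⟨15, key (Ew 11) (Ew 9) (Ew 15) (by decide)⟩
  | ⟨11, _⟩, ⟨10, _⟩ => exact ⟨1, key (Ew 11) (Ew 10) (Ew 1) (by decide)⟩
  | ⟨11, _⟩, ⟨11, _⟩ => exact ⟨0, key (Ew 11) (Ew 11) (Ew 0) (by decide)⟩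
  | ⟨11, _⟩, ⟨12, _⟩ => exact ⟨2, key (Ew 11) (Ew 12) (Ew 2) (by decide)⟩
  | ⟨11, _⟩, ⟨13, _⟩ => exact ⟨7, key (Ew 11) (Ew 13) (Ew 7) (by decide)⟩
  | ⟨11, _⟩, ⟨14, _⟩ => exact ⟨8, key (Ew 11) (Ew 14) (Ew 8) (by decide)⟩
  | ⟨11, _⟩, ⟨15, _⟩ => exact ⟨9, key (Ew 11) (Ew 15) (Ew 9) (by decide)⟩
  | ⟨12, _⟩, ⟨0, _⟩ => exact ⟨12, key (Ew 12) (Ew 0) (Ew 12) (by decide)⟩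
  | ⟨12, _⟩, ⟨1, _⟩ => exact ⟨4, key (Ew 12) (Ew 1) (Ew 4) (by decide)⟩
  | ⟨12, _⟩, ⟨2, _⟩ => exact ⟨15, key (Ew 12) (Ew 2) (Ew 15) (by decide)⟩
  | ⟨12, _⟩, ⟨3, _⟩ => exact ⟨14, key (Ew 12) (Ew 3) (Ew 14) (by decide)⟩
  | ⟨12, _⟩, ⟨4, _⟩ => exact ⟨8, key (Ew 12) (Ew 4) (Ew 8) (by decide)⟩
  | ⟨12, _⟩, ⟨5, _⟩ => exact ⟨1, key (Ew 12) (Ew 5) (Ew 1) (by decide)⟩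
  | ⟨12, _⟩, ⟨6, _⟩ => exact ⟨10, key (Ew 12) (Ew 6) (Ew 10) (by decide)⟩
  | ⟨12, _⟩, ⟨7, _⟩ => exact ⟨11, key (Ew 12) (Ew 7) (Ew 11) (by decide)⟩
  | ⟨12, _⟩, ⟨8, _⟩ => exact ⟨5, key (Ew 12) (Ew 8) (Ew 5) (by decide)⟩
  | ⟨12, _⟩, ⟨9, _⟩ => exact ⟨13, key (Ew 12) (Ew 9) (Ew 13) (by decide)⟩
  | ⟨12, _⟩, ⟨10, _⟩ => exact ⟨3, key (Ew 12) (Ew 10) (Ew 3) (by decide)⟩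
  | ⟨12, _⟩, ⟨11, _⟩ => exact ⟨2, key (Ew 12) (Ew 11) (Ew 2) (by decide)⟩
  | ⟨12, _⟩, ⟨12, _⟩ => exact ⟨9, key (Ew 12) (Ew 12) (Ew 9) (by decide)⟩
  | ⟨12, _⟩, ⟨13, _⟩ => exact ⟨0, key (Ew 12) (Ew 13) (Ew 0) (by decide)⟩
  | ⟨12, _⟩, ⟨14, _⟩ => exact ⟨6, key (Ew 12) (Ew 14) (Ew 6) (by decide)⟩
  | ⟨12, _⟩, ⟨15, _⟩ => exact ⟨7, key (Ew 12) (Ew 15) (Ew 7) (by decide)⟩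
  | ⟨13, _⟩, ⟨0, _⟩ => exact ⟨13, key (Ew 13) (Ew 0) (Ew 13) (by decide)⟩
  | ⟨13, _⟩, ⟨1, _⟩ => exact ⟨5, key (Ew 13) (Ew 1) (Ew 5) (by decide)⟩
  | ⟨13, _⟩, ⟨2, _⟩ => exact ⟨11, key (Ew 13) (Ew 2) (Ew 11) (by decide)⟩
  | ⟨13, _⟩, ⟨3, _⟩ => exact ⟨10, key (Ew 13) (Ew 3) (Ew 10) (by decide)⟩
  | ⟨13, _⟩, ⟨4, _⟩ => exact ⟨1, key (Ew 13) (Ew 4) (Ew 1) (by decide)⟩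
  | ⟨13, _⟩, ⟨5, _⟩ => exact ⟨8, key (Ew 13) (Ew 5) (Ew 8) (by decide)⟩
  | ⟨13, _⟩, ⟨6, _⟩ => exact ⟨14, key (Ew 13) (Ew 6) (Ew 14) (by decide)⟩
  | ⟨13, _⟩, ⟨7, _⟩ => exact ⟨15, key (Ew 13) (Ew 7) (Ew 15) (by decide)⟩
  | ⟨13, _⟩, ⟨8, _⟩ => exact ⟨4, key (Ew 13) (Ew 8) (Ew 4) (by decide)⟩
  | ⟨13, _⟩, ⟨9, _⟩ => exact ⟨12, key (Ew 13) (Ew 9) (Ew 12) (by decide)⟩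
  | ⟨13, _⟩, ⟨10, _⟩ => exact ⟨6, key (Ew 13) (Ew 10) (Ew 6) (by decide)⟩
  | ⟨13, _⟩, ⟨11, _⟩ => exact ⟨7, key (Ew 13) (Ew 11) (Ew 7) (by decide)⟩
  | ⟨13, _⟩, ⟨12, _⟩ => exact ⟨0, key (Ew 13) (Ew 12) (Ew 0) (by decide)⟩
  | ⟨13, _⟩, ⟨13, _⟩ => exact ⟨9, key (Ew 13) (Ew 13) (Ew 9) (by decide)⟩
  | ⟨13, _⟩, ⟨14, _⟩ => exact ⟨3, key (Ew 13) (Ew 14) (Ew 3) (by decide)⟩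
  | ⟨13, _⟩, ⟨15, _⟩ => exact ⟨2, key (Ew 13) (Ew 15) (Ew 2) (by decide)⟩
  | ⟨14, _⟩, ⟨0, _⟩ => exact ⟨14, key (Ew 14) (Ew 0) (Ew 14) (by decide)⟩
  | ⟨14, _⟩, ⟨1, _⟩ => exact ⟨15, key (Ew 14) (Ew 1) (Ew 15) (by decide)⟩
  | ⟨14, _⟩, ⟨2, _⟩ => exact ⟨4, key (Ew 14) (Ew 2) (Ew 4) (by decide)⟩
  | ⟨14, _⟩, ⟨3, _⟩ => exact ⟨12, key (Ew 14) (Ew 3) (Ew 12) (by decide)⟩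
  | ⟨14, _⟩, ⟨4, _⟩ => exact ⟨2, key (Ew 14) (Ew 4) (Ew 2) (by decide)⟩
  | ⟨14, _⟩, ⟨5, _⟩ => exact ⟨7, key (Ew 14) (Ew 5) (Ew 7) (by decide)⟩
  | ⟨14, _⟩, ⟨6, _⟩ => exact ⟨13, key (Ew 14) (Ew 6) (Ew 13) (by decide)⟩
  | ⟨14, _⟩, ⟨7, _⟩ => exact ⟨5, key (Ew 14) (Ew 7) (Ew 5) (by decide)⟩
  | ⟨14, _⟩, ⟨8, _⟩ => exact ⟨11, key (Ew 14) (Ew 8) (Ew 11) (by decide)⟩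
  | ⟨14, _⟩, ⟨9, _⟩ => exact ⟨10, key (Ew 14) (Ew 9) (Ew 10) (by decide)⟩
  | ⟨14, _⟩, ⟨10, _⟩ => exact ⟨9, key (Ew 14) (Ew 10) (Ew 9) (by decide)⟩
  | ⟨14, _⟩, ⟨11, _⟩ => exact ⟨8, key (Ew 14) (Ew 11) (Ew 8) (by decide)⟩
  | ⟨14, _⟩, ⟨12, _⟩ => exact ⟨3, key (Ew 14) (Ew 12) (Ew 3) (by decide)⟩
  | ⟨14, _⟩, ⟨13, _⟩ => exact ⟨6, key (Ew 14) (Ew 13) (Ew 6) (by decide)⟩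
  | ⟨14, _⟩, ⟨14, _⟩ => exact ⟨0, key (Ew 14) (Ew 14) (Ew 0) (by decide)⟩
  | ⟨14, _⟩, ⟨15, _⟩ => exact ⟨1, key (Ew 14) (Ew 15) (Ew 1) (by decide)⟩
  | ⟨15, _⟩, ⟨0, _⟩ => exact ⟨15, key (Ew 15) (Ew 0) (Ew 15) (by decide)⟩
  | ⟨15, _⟩, ⟨1, _⟩ => exact ⟨14, key (Ew 15) (Ew 1) (Ew 14) (by decide)⟩
  | ⟨15, _⟩, ⟨2, _⟩ => exact ⟨13, key (Ew 15) (Ew 2) (Ew 13) (by decide)⟩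
  | ⟨15, _⟩, ⟨3, _⟩ => exact ⟨5, key (Ew 15) (Ew 3) (Ew 5) (by decide)⟩
  | ⟨15, _⟩, ⟨4, _⟩ => exact ⟨6, key (Ew 15) (Ew 4) (Ew 6) (by decide)⟩
  | ⟨15, _⟩, ⟨5, _⟩ => exact ⟨3, key (Ew 15) (Ew 5) (Ew 3) (by decide)⟩
  | ⟨15, _⟩, ⟨6, _⟩ => exact ⟨4, key (Ew 15) (Ew 6) (Ew 4) (by decide)⟩
  | ⟨15, _⟩, ⟨7, _⟩ => exact ⟨12, key (Ew 15) (Ew 7) (Ew 12) (by decide)⟩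
  | ⟨15, _⟩, ⟨8, _⟩ => exact ⟨10, key (Ew 15) (Ew 8) (Ew 10) (by decide)⟩
  | ⟨15, _⟩, ⟨9, _⟩ => exact ⟨11, key (Ew 15) (Ew 9) (Ew 11) (by decide)⟩
  | ⟨15, _⟩, ⟨10, _⟩ => exact ⟨8, key (Ew 15) (Ew 10) (Ew 8) (by decide)⟩
  | ⟨15, _⟩, ⟨11, _⟩ => exact ⟨9, key (Ew 15) (Ew 11) (Ew 9) (by decide)⟩
  | ⟨15, _⟩, ⟨12, _⟩ => exact ⟨7, key (Ew 15) (Ew 12) (Ew 7) (by decide)⟩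
  | ⟨15, _⟩, ⟨13, _⟩ => exact ⟨2, key (Ew 15) (Ew 13) (Ew 2) (by decide)⟩
  | ⟨15, _⟩, ⟨14, _⟩ => exact ⟨1, key (Ew 15) (Ew 14) (Ew 1) (by decide)⟩
  | ⟨15, _⟩, ⟨15, _⟩ => exact ⟨0, key (Ew 15) (Ew 15) (Ew 0) (by decide)⟩
  | ⟨n+16, h⟩, _ => exact absurd h (by omega)
  | ⟨_, _⟩, ⟨n+16, h⟩ => exact absurd h (by omega)

set_option maxHeartbeats 1000000 in
theorem eH_inv (i : Fin 16) : ∃ m : Fin 16, eH i * eH m = 1 := by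
  have key2 : ∀ u v : List ℕ, (∀ l ∈ L3, wP (u ++ v) l = wP [] l) →
      wQ 3 u * wQ 3 v = 1 :=
    fun u v h => ((wQ_append 3 u v).symm.trans (wQ3_eq _ _ h)).trans wQ_nil
  match i with
  | ⟨0, _⟩ => exact ⟨0, key2 (Ew 0) (Ew 0) (by decide)⟩
  | ⟨1, _⟩ => exact ⟨1, key2 (Ew 1) (Ew 1) (by decide)⟩
  | ⟨2, _⟩ => exact ⟨7, key2 (Ew 2) (Ew 7) (by decide)⟩
  | ⟨3, _⟩ => exact ⟨3, key2 (Ew 3) (Ew 3) (by decide)⟩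
  | ⟨4, _⟩ => exact ⟨4, key2 (Ew 4) (Ew 4) (by decide)⟩
  | ⟨5, _⟩ => exact ⟨5, key2 (Ew 5) (Ew 5) (by decide)⟩
  | ⟨6, _⟩ => exact ⟨6, key2 (Ew 6) (Ew 6) (by decide)⟩
  | ⟨7, _⟩ => exact ⟨2, key2 (Ew 7) (Ew 2) (by decide)⟩
  | ⟨8, _⟩ => exact ⟨8, key2 (Ew 8) (Ew 8) (by decide)⟩
  | ⟨9, _⟩ => exact ⟨9, key2 (Ew 9) (Ew 9) (by decide)⟩
  | ⟨10, _⟩ => exact ⟨10, key2 (Ew 10) (Ew 10) (by decide)⟩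
  | ⟨11, _⟩ => exact ⟨11, key2 (Ew 11) (Ew 11) (by decide)⟩
  | ⟨12, _⟩ => exact ⟨13, key2 (Ew 12) (Ew 13) (by decide)⟩
  | ⟨13, _⟩ => exact ⟨12, key2 (Ew 13) (Ew 12) (by decide)⟩
  | ⟨14, _⟩ => exact ⟨14, key2 (Ew 14) (Ew 14) (by decide)⟩
  | ⟨15, _⟩ => exact ⟨15, key2 (Ew 15) (Ew 15) (by decide)⟩
  | ⟨n+16, h⟩ => exact absurd h (by omega)

theorem eH_inj : Function.Injective eH := by
  intro i j h
  have hf : fp3n (eH i) = fp3n (eH j) := congrArg fp3n h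
  have hd : ∀ i j : Fin 16, i ≠ j →
      encLL (L3.map ⇑(wP (Ew i))) ≠ encLL (L3.map ⇑(wP (Ew j))) := by decide
  by_contra hne
  exact hd i j hne hf

/-- The subgroup of `HQ 3` consisting of the sixteen elements `eH i`. -/
def Esub : Subgroup (HQ 3) where
  carrier := {x | ∃ i : Fin 16, x = eH i}
  one_mem' := ⟨0, wQ_nil.symm⟩
  mul_mem' := by
    rintro x y ⟨i, rfl⟩ ⟨j, rfl⟩
    obtain ⟨m, hm⟩ := eH_mul i j
    exact ⟨m, hm⟩
  inv_mem' := by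
    rintro x ⟨i, rfl⟩
    obtain ⟨m, hm⟩ := eH_inv i
    exact ⟨m, (inv_eq_of_mul_eq_one_right hm)⟩

theorem gQ_wQ : aQ 3 = wQ 3 [0] ∧ bQ 3 = wQ 3 [1] ∧ cQ 3 = wQ 3 [2] ∧ dQ 3 = wQ 3 [3] := by
  refine ⟨?_, ?_, ?_, ?_⟩ <;>
  · apply congrArg
    apply Subtype.ext
    simp [wP, wG, aG, bG, cG, dG, gp]

set_option maxHeartbeats 2000000 in
theorem gQ_conj (n : Fin 4) (i : Fin 16) : ∃ j : Fin 16,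
    wQ 3 [(n : ℕ)] * eH i * (wQ 3 [(n : ℕ)])⁻¹ = eH j := by
  have hinv : (wQ 3 [(n : ℕ)])⁻¹ = wQ 3 [(n : ℕ)] := by
    apply inv_eq_of_mul_eq_one_right
    refine (key _ _ [] ?_).trans wQ_nil
    fin_cases n <;> decide
  rw [hinv]
  match n, i with
  | ⟨0, _⟩, ⟨0, _⟩ => exact ⟨0, key4 [0] (Ew 0) (Ew 0) (by decide)⟩
  | ⟨0, _⟩, ⟨1, _⟩ => exact ⟨6, key4 [0] (Ew 1) (Ew 6) (by decide)⟩
  | ⟨0, _⟩, ⟨2, _⟩ => exact ⟨7, key4 [0] (Ew 2) (Ew 7) (by decide)⟩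
  | ⟨0, _⟩, ⟨3, _⟩ => exact ⟨8, key4 [0] (Ew 3) (Ew 8) (by decide)⟩
  | ⟨0, _⟩, ⟨4, _⟩ => exact ⟨10, key4 [0] (Ew 4) (Ew 10) (by decide)⟩
  | ⟨0, _⟩, ⟨5, _⟩ => exact ⟨14, key4 [0] (Ew 5) (Ew 14) (by decide)⟩
  | ⟨0, _⟩, ⟨6, _⟩ => exact ⟨1, key4 [0] (Ew 6) (Ew 1) (by decide)⟩
  | ⟨0, _⟩, ⟨7, _⟩ => exact ⟨2, key4 [0] (Ew 7) (Ew 2) (by decide)⟩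
  | ⟨0, _⟩, ⟨8, _⟩ => exact ⟨3, key4 [0] (Ew 8) (Ew 3) (by decide)⟩
  | ⟨0, _⟩, ⟨9, _⟩ => exact ⟨9, key4 [0] (Ew 9) (Ew 9) (by decide)⟩
  | ⟨0, _⟩, ⟨10, _⟩ => exact ⟨4, key4 [0] (Ew 10) (Ew 4) (by decide)⟩
  | ⟨0, _⟩, ⟨11, _⟩ => exact ⟨15, key4 [0] (Ew 11) (Ew 15) (by decide)⟩
  | ⟨0, _⟩, ⟨12, _⟩ => exact ⟨12, key4 [0] (Ew 12) (Ew 12) (by decide)⟩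
  | ⟨0, _⟩, ⟨13, _⟩ => exact ⟨13, key4 [0] (Ew 13) (Ew 13) (by decide)⟩
  | ⟨0, _⟩, ⟨14, _⟩ => exact ⟨5, key4 [0] (Ew 14) (Ew 5) (by decide)⟩
  | ⟨0, _⟩, ⟨15, _⟩ => exact ⟨11, key4 [0] (Ew 15) (Ew 11) (by decide)⟩
  | ⟨1, _⟩, ⟨0, _⟩ => exact ⟨0, key4 [1] (Ew 0) (Ew 0) (by decide)⟩
  | ⟨1, _⟩, ⟨1, _⟩ => exact ⟨8, key4 [1] (Ew 1) (Ew 8) (by decide)⟩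
  | ⟨1, _⟩, ⟨2, _⟩ => exact ⟨7, key4 [1] (Ew 2) (Ew 7) (by decide)⟩
  | ⟨1, _⟩, ⟨3, _⟩ => exact ⟨3, key4 [1] (Ew 3) (Ew 3) (by decide)⟩
  | ⟨1, _⟩, ⟨4, _⟩ => exact ⟨4, key4 [1] (Ew 4) (Ew 4) (by decide)⟩
  | ⟨1, _⟩, ⟨5, _⟩ => exact ⟨5, key4 [1] (Ew 5) (Ew 5) (by decide)⟩
  | ⟨1, _⟩, ⟨6, _⟩ => exact ⟨6, key4 [1] (Ew 6) (Ew 6) (by decide)⟩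
  | ⟨1, _⟩, ⟨7, _⟩ => exact ⟨2, key4 [1] (Ew 7) (Ew 2) (by decide)⟩
  | ⟨1, _⟩, ⟨8, _⟩ => exact ⟨1, key4 [1] (Ew 8) (Ew 1) (by decide)⟩
  | ⟨1, _⟩, ⟨9, _⟩ => exact ⟨9, key4 [1] (Ew 9) (Ew 9) (by decide)⟩
  | ⟨1, _⟩, ⟨10, _⟩ => exact ⟨14, key4 [1] (Ew 10) (Ew 14) (by decide)⟩
  | ⟨1, _⟩, ⟨11, _⟩ => exact ⟨11, key4 [1] (Ew 11) (Ew 11) (by decide)⟩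
  | ⟨1, _⟩, ⟨12, _⟩ => exact ⟨13, key4 [1] (Ew 12) (Ew 13) (by decide)⟩
  | ⟨1, _⟩, ⟨13, _⟩ => exact ⟨12, key4 [1] (Ew 13) (Ew 12) (by decide)⟩
  | ⟨1, _⟩, ⟨14, _⟩ => exact ⟨10, key4 [1] (Ew 14) (Ew 10) (by decide)⟩
  | ⟨1, _⟩, ⟨15, _⟩ => exact ⟨15, key4 [1] (Ew 15) (Ew 15) (by decide)⟩
  | ⟨2, _⟩, ⟨0, _⟩ => exact ⟨0, key4 [2] (Ew 0) (Ew 0) (by decide)⟩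
  | ⟨2, _⟩, ⟨1, _⟩ => exact ⟨10, key4 [2] (Ew 1) (Ew 10) (by decide)⟩
  | ⟨2, _⟩, ⟨2, _⟩ => exact ⟨12, key4 [2] (Ew 2) (Ew 12) (by decide)⟩
  | ⟨2, _⟩, ⟨3, _⟩ => exact ⟨3, key4 [2] (Ew 3) (Ew 3) (by decide)⟩
  | ⟨2, _⟩, ⟨4, _⟩ => exact ⟨4, key4 [2] (Ew 4) (Ew 4) (by decide)⟩
  | ⟨2, _⟩, ⟨5, _⟩ => exact ⟨5, key4 [2] (Ew 5) (Ew 5) (by decide)⟩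
  | ⟨2, _⟩, ⟨6, _⟩ => exact ⟨6, key4 [2] (Ew 6) (Ew 6) (by decide)⟩
  | ⟨2, _⟩, ⟨7, _⟩ => exact ⟨13, key4 [2] (Ew 7) (Ew 13) (by decide)⟩
  | ⟨2, _⟩, ⟨8, _⟩ => exact ⟨14, key4 [2] (Ew 8) (Ew 14) (by decide)⟩
  | ⟨2, _⟩, ⟨9, _⟩ => exact ⟨9, key4 [2] (Ew 9) (Ew 9) (by decide)⟩
  | ⟨2, _⟩, ⟨10, _⟩ => exact ⟨1, key4 [2] (Ew 10) (Ew 1) (by decide)⟩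
  | ⟨2, _⟩, ⟨11, _⟩ => exact ⟨11, key4 [2] (Ew 11) (Ew 11) (by decide)⟩
  | ⟨2, _⟩, ⟨12, _⟩ => exact ⟨2, key4 [2] (Ew 12) (Ew 2) (by decide)⟩
  | ⟨2, _⟩, ⟨13, _⟩ => exact ⟨7, key4 [2] (Ew 13) (Ew 7) (by decide)⟩
  | ⟨2, _⟩, ⟨14, _⟩ => exact ⟨8, key4 [2] (Ew 14) (Ew 8) (by decide)⟩
  | ⟨2, _⟩, ⟨15, _⟩ => exact ⟨15, key4 [2] (Ew 15) (Ew 15) (by decide)⟩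
  | ⟨3, _⟩, ⟨0, _⟩ => exact ⟨0, key4 [3] (Ew 0) (Ew 0) (by decide)⟩
  | ⟨3, _⟩, ⟨1, _⟩ => exact ⟨14, key4 [3] (Ew 1) (Ew 14) (by decide)⟩
  | ⟨3, _⟩, ⟨2, _⟩ => exact ⟨13, key4 [3] (Ew 2) (Ew 13) (by decide)⟩
  | ⟨3, _⟩, ⟨3, _⟩ => exact ⟨3, key4 [3] (Ew 3) (Ew 3) (by decide)⟩
  | ⟨3, _⟩, ⟨4, _⟩ => exact ⟨4, key4 [3] (Ew 4) (Ew 4) (by decide)⟩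
  | ⟨3, _⟩, ⟨5, _⟩ => exact ⟨5, key4 [3] (Ew 5) (Ew 5) (by decide)⟩
  | ⟨3, _⟩, ⟨6, _⟩ => exact ⟨6, key4 [3] (Ew 6) (Ew 6) (by decide)⟩
  | ⟨3, _⟩, ⟨7, _⟩ => exact ⟨12, key4 [3] (Ew 7) (Ew 12) (by decide)⟩
  | ⟨3, _⟩, ⟨8, _⟩ => exact ⟨10, key4 [3] (Ew 8) (Ew 10) (by decide)⟩
  | ⟨3, _⟩, ⟨9, _⟩ => exact ⟨9, key4 [3] (Ew 9) (Ew 9) (by decide)⟩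
  | ⟨3, _⟩, ⟨10, _⟩ => exact ⟨8, key4 [3] (Ew 10) (Ew 8) (by decide)⟩
  | ⟨3, _⟩, ⟨11, _⟩ => exact ⟨11, key4 [3] (Ew 11) (Ew 11) (by decide)⟩
  | ⟨3, _⟩, ⟨12, _⟩ => exact ⟨7, key4 [3] (Ew 12) (Ew 7) (by decide)⟩
  | ⟨3, _⟩, ⟨13, _⟩ => exact ⟨2, key4 [3] (Ew 13) (Ew 2) (by decide)⟩
  | ⟨3, _⟩, ⟨14, _⟩ => exact ⟨1, key4 [3] (Ew 14) (Ew 1) (by decide)⟩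
  | ⟨3, _⟩, ⟨15, _⟩ => exact ⟨15, key4 [3] (Ew 15) (Ew 15) (by decide)⟩
  | ⟨m+4, h⟩, _ => exact absurd h (by omega)
  | ⟨_, _⟩, ⟨m+16, h⟩ => exact absurd h (by omega)

theorem esub_conj : ∀ g : HQ 3, ∀ i : Fin 16, ∃ j, g * eH i * g⁻¹ = eH j := by
  have master : ∀ g ∈ Subgroup.closure {aQ 3, bQ 3, cQ 3, dQ 3},
      ∀ i : Fin 16, ∃ j, g * eH i * g⁻¹ = eH j := by
    intro g hg
    induction hg using Subgroup.closure_induction with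
    | mem x hx =>
      obtain ⟨h0, h1, h2, h3⟩ := gQ_wQ
      rcases hx with rfl | rfl | rfl | rfl
      · rw [h0]; exact gQ_conj 0
      · rw [h1]; exact gQ_conj 1
      · rw [h2]; exact gQ_conj 2
      · rw [h3]; exact gQ_conj 3
    | one => intro i; exact ⟨i, by group⟩
    | mul x y hx hy px py =>
      intro i
      obtain ⟨j, hj⟩ := py i
      obtain ⟨j2, hj2⟩ := px j
      refine ⟨j2, ?_⟩
      rw [show x * y * eH i * (x * y)⁻¹ = x * (y * eH i * y⁻¹) * x⁻¹ by group, hj, hj2]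
    | inv x hx px =>
      intro i
      choose f hf using px
      have hinj : Function.Injective f := by
        intro i1 i2 h12
        apply eH_inj
        have e1 := hf i1
        have e2 := hf i2
        rw [h12] at e1
        have h3 : x * eH i1 * x⁻¹ = x * eH i2 * x⁻¹ := e1.trans e2.symm
        exact mul_left_cancel (mul_right_cancel h3)
      obtain ⟨j, hj⟩ := Finite.injective_iff_surjective.mp hinj i
      refine ⟨j, ?_⟩
      have e := hf j
      rw [hj] at e
      rw [← e]
      group
  intro g i
  exact master g (by rw [← HQ_gen 3]; trivial) i

instance esub_normal : Esub.Normal := by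
  constructor
  intro n hn g
  obtain ⟨i, rfl⟩ := hn
  obtain ⟨j, hj⟩ := esub_conj g i
  exact ⟨j, hj⟩

theorem bQ3_mem_Esub : bQ 3 ∈ Esub := by
  refine ⟨6, ?_⟩
  rw [gQ_wQ.2.1]
  exact wQ3_eq _ _ (by decide)

theorem card_Esub_le : Nat.card Esub ≤ 16 := by
  have hsurj : Function.Surjective (fun i : Fin 16 => (⟨eH i, ⟨i, rfl⟩⟩ : ↥Esub)) := by
    rintro ⟨x, ⟨i, rfl⟩⟩
    exact ⟨i, rfl⟩
  have h := Nat.card_le_card_of_surjective _ hsurj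
  simpa using h

theorem card_B3_le' : Nat.card (Bk 3) ≤ 16 := by
  have hle : Bk 3 ≤ Esub := Subgroup.normalClosure_le_normal (by
    intro x hx
    rcases hx with rfl
    exact bQ3_mem_Esub)
  calc Nat.card (Bk 3) ≤ Nat.card Esub := Subgroup.card_le_of_le hle
    _ ≤ 16 := card_Esub_le
theorem card_Q3 : Nat.card (Qk 3) = 8 := by
  have h1 := Subgroup.card_eq_card_quotient_mul_card_subgroup (Bk 3)
  rw [card_HQ3] at h1
  have h2 := card_Qk_le 3
  have h3 := card_B3_le'
  -- 128 = card Q3 * card B3, card Q3 ≤ 8, card B3 ≤ 16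
  nlinarith [h1, h2, h3]

theorem card_Qk (k : ℕ) (hk : 3 ≤ k) : Nat.card (Qk k) = 8 := by
  -- surjection Qk k → Qk 3
  have hker : Bk k ≤ ((qq 3).comp (resk k 3 hk)).ker := by
    apply Subgroup.normalClosure_le_normal
    intro g hg
    rcases hg with rfl
    rw [SetLike.mem_coe, MonoidHom.mem_ker, MonoidHom.comp_apply]
    rw [show resk k 3 hk (bQ k) = bQ 3 from rfl]
    exact qq_b 3
  have hsurj2 : Function.Surjective ((qq 3).comp (resk k 3 hk)) :=
    (qq_surj 3).comp (resk_surj k 3 hk)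
  set ρ : Qk k →* Qk 3 := QuotientGroup.lift (Bk k) ((qq 3).comp (resk k 3 hk)) hker with hρ
  have hsurj : Function.Surjective ρ := by
    intro z
    obtain ⟨u, rfl⟩ := hsurj2 z
    exact ⟨QuotientGroup.mk u, rfl⟩
  have hge : 8 ≤ Nat.card (Qk k) := by
    rw [← card_Q3]
    exact Nat.card_le_card_of_surjective ρ hsurj
  exact le_antisymm (card_Qk_le k) hge

theorem card_Bk (k : ℕ) (hk : 3 ≤ k) : Nat.card (HQ k) = 8 * Nat.card (Bk k) := by
  have h1 := Subgroup.card_eq_card_quotient_mul_card_subgroup (Bk k)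
  rw [card_Qk k hk] at h1
  exact h1
theorem aP_inv : aP⁻¹ = aP := inv_eq_of_mul_eq_one_right aP_sq

theorem bP_st : bP ∈ StabG := fun l => (bcd_head l).1
theorem cP_st : cP ∈ StabG := fun l => (bcd_head l).2.1
theorem dP_st : dP ∈ StabG := fun l => (bcd_head l).2.2

theorem aba_st : aP * bP * aP ∈ StabG := by
  intro l
  rcases l with _ | ⟨x, xs⟩
  · rfl
  · show (aFun (bFun (aFun (x :: xs)))).head? = _
    cases x <;> simp [aFun, bFun, cFun, dFun]

theorem aca_st : aP * cP * aP ∈ StabG := by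
  intro l
  rcases l with _ | ⟨x, xs⟩
  · rfl
  · show (aFun (cFun (aFun (x :: xs)))).head? = _
    cases x <;> simp [aFun, bFun, cFun, dFun]

theorem ada_st : aP * dP * aP ∈ StabG := by
  intro l
  rcases l with _ | ⟨x, xs⟩
  · rfl
  · show (aFun (dFun (aFun (x :: xs)))).head? = _
    cases x <;> simp [aFun, bFun, cFun, dFun]

theorem stab_cons {σ : Perm LB} (hσ : σ ∈ StabG) (x : Bool) (l : LB) :
    x :: (σ (x :: l)).tail = σ (x :: l) := by
  have h := hσ (x :: l)
  rcases hL : σ (x :: l) with _ | ⟨y, t⟩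
  · rw [hL] at h; simp at h
  · rw [hL] at h
    have hyx : y = x := by simpa using h
    simp [hyx]

/-- The section homomorphism at the root. -/
def sec (x : Bool) : ↥StabG →* Perm LB :=
  MonoidHom.mk' (fun σ =>
    { toFun := fun l => (σ.1 (x :: l)).tail
      invFun := fun l => (σ.1⁻¹ (x :: l)).tail
      left_inv := fun l => by
        show (σ.1⁻¹ (x :: (σ.1 (x :: l)).tail)).tail = l
        rw [stab_cons σ.2, Equiv.Perm.inv_apply_self]
        rfl
      right_inv := fun l => by
        show (σ.1 (x :: (σ.1⁻¹ (x :: l)).tail)).tail = l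
        rw [stab_cons (inv_mem σ.2), Equiv.Perm.apply_inv_self]
        rfl })
  (fun σ τ => Equiv.ext fun l => by
    show ((σ * τ).1 (x :: l)).tail = (σ.1 (x :: (τ.1 (x :: l)).tail)).tail
    rw [stab_cons τ.2]
    rfl)

theorem sec_apply (x : Bool) (σ : ↥StabG) (l : LB) :
    sec x σ l = (σ.1 (x :: l)).tail := rfl

/-- The six generators of the stabilizer subgroup. -/
def hsSet : Set (Perm LB) := {bP, cP, dP, aP * bP * aP, aP * cP * aP, aP * dP * aP}

def HS : Subgroup (Perm LB) := Subgroup.closure hsSet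

theorem hsSet_st : hsSet ⊆ StabG := by
  rintro σ (rfl | rfl | rfl | rfl | rfl | rfl)
  exacts [bP_st, cP_st, dP_st, aba_st, aca_st, ada_st]

theorem hsSet_grig : hsSet ⊆ Grigorchuk := by
  rintro σ (rfl | rfl | rfl | rfl | rfl | rfl)
  exacts [bP_mem, cP_mem, dP_mem,
    mul_mem (mul_mem aP_mem bP_mem) aP_mem,
    mul_mem (mul_mem aP_mem cP_mem) aP_mem,
    mul_mem (mul_mem aP_mem dP_mem) aP_mem]

theorem HS_le_st : HS ≤ StabG := (Subgroup.closure_le _).mpr hsSet_st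
theorem HS_le_grig : HS ≤ Grigorchuk := (Subgroup.closure_le _).mpr hsSet_grig

theorem conj_a_mem : ∀ {h : Perm LB}, h ∈ HS → aP * h * aP ∈ HS := by
  intro h hh
  induction hh using Subgroup.closure_induction with
  | mem g hg =>
    rcases hg with rfl | rfl | rfl | rfl | rfl | rfl
    · exact Subgroup.subset_closure (by right; right; right; left; rfl)
    · exact Subgroup.subset_closure (by right; right; right; right; left; rfl)
    · exact Subgroup.subset_closure (by right; right; right; right; right; rfl)
    · rw [show aP * (aP * bP * aP) * aP = (aP * aP) * bP * (aP * aP) by group, aP_sq,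
        one_mul, mul_one]
      exact Subgroup.subset_closure (by left; rfl)
    · rw [show aP * (aP * cP * aP) * aP = (aP * aP) * cP * (aP * aP) by group, aP_sq,
        one_mul, mul_one]
      exact Subgroup.subset_closure (by right; left; rfl)
    · rw [show aP * (aP * dP * aP) * aP = (aP * aP) * dP * (aP * aP) by group, aP_sq,
        one_mul, mul_one]
      exact Subgroup.subset_closure (by right; right; left; rfl)
  | one => rw [mul_one, aP_sq]; exact one_mem _
  | mul g1 g2 h1 h2 p1 p2 =>
    have : aP * (g1 * g2) * aP = (aP * g1 * aP) * (aP * g2 * aP) := by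
      rw [show (aP * g1 * aP) * (aP * g2 * aP) = aP * g1 * (aP * aP) * g2 * aP by group,
        aP_sq, mul_one]
      group
    rw [this]
    exact mul_mem p1 p2
  | inv g hg p =>
    have : aP * g⁻¹ * aP = (aP * g * aP)⁻¹ := by
      rw [mul_inv_rev, mul_inv_rev, aP_inv]
      group
    rw [this]
    exact inv_mem p

theorem cover : ∀ g ∈ Grigorchuk, g ∈ HS ∨ aP * g ∈ HS := by
  intro g hg
  induction hg using Subgroup.closure_induction with
  | mem g hg =>
    rcases hg with rfl | rfl | rfl | rfl
    · right; rw [aP_sq]; exact one_mem _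
    · left; exact Subgroup.subset_closure (by left; rfl)
    · left; exact Subgroup.subset_closure (by right; left; rfl)
    · left; exact Subgroup.subset_closure (by right; right; left; rfl)
  | one => left; exact one_mem _
  | mul g1 g2 h1 h2 p1 p2 =>
    rcases p1 with q1 | q1 <;> rcases p2 with q2 | q2
    · left; exact mul_mem q1 q2
    · right
      have : aP * (g1 * g2) = (aP * g1 * aP) * (aP * g2) := by
        rw [show (aP * g1 * aP) * (aP * g2) = aP * g1 * (aP * aP) * g2 by group, aP_sq,
          mul_one, mul_assoc]
      rw [this]
      exact mul_mem (conj_a_mem q1) q2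
    · right
      rw [← mul_assoc]
      exact mul_mem q1 q2
    · left
      have : g1 * g2 = (aP * (aP * g1) * aP) * (aP * g2) := by
        rw [show (aP * (aP * g1) * aP) * (aP * g2) = (aP * aP) * g1 * (aP * aP) * g2 by group,
          aP_sq, one_mul, mul_one]
      rw [this]
      exact mul_mem (conj_a_mem q1) q2
  | inv g hg p =>
    rcases p with q | q
    · left; exact inv_mem q
    · right
      have h1 : g⁻¹ * aP ∈ HS := by
        have h2 := inv_mem q
        rwa [mul_inv_rev, aP_inv] at h2
      have h3 := conj_a_mem h1
      rwa [show aP * (g⁻¹ * aP) * aP = aP * g⁻¹ * (aP * aP) by group, aP_sq, mul_one] at h3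

theorem stab_grig_mem_HS : ∀ g ∈ Grigorchuk, g ∈ StabG → g ∈ HS := by
  intro g hg hst
  rcases cover g hg with h | h
  · exact h
  · exfalso
    have h1 := len_pres hg [false]
    have h2 := hst [false]
    have h3 : g [false] = [false] := by
      rcases hL : g [false] with _ | ⟨y, t⟩
      · rw [hL] at h1; simp at h1
      · rw [hL] at h1 h2
        simp at h1 h2
        rw [h2, h1]
    have h4 := HS_le_st h [false]
    have h5 : (aP * g) [false] = aFun (g [false]) := rfl
    rw [h5, h3] at h4
    simp [aFun] at h4
def bS : ↥StabG := ⟨bP, bP_st⟩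
def cS : ↥StabG := ⟨cP, cP_st⟩
def dS : ↥StabG := ⟨dP, dP_st⟩
def abaS : ↥StabG := ⟨aP * bP * aP, aba_st⟩
def acaS : ↥StabG := ⟨aP * cP * aP, aca_st⟩
def adaS : ↥StabG := ⟨aP * dP * aP, ada_st⟩

def hsSetS : Set ↥StabG := {bS, cS, dS, abaS, acaS, adaS}

def HSS : Subgroup ↥StabG := Subgroup.closure hsSetS

theorem lift_HS : ∀ g, g ∈ HS → ∀ hst : g ∈ StabG, (⟨g, hst⟩ : ↥StabG) ∈ HSS := by
  intro g hg
  induction hg using Subgroup.closure_induction with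
  | mem g hg =>
    intro hst
    apply Subgroup.subset_closure
    rcases hg with rfl | rfl | rfl | rfl | rfl | rfl
    · exact Or.inl (Subtype.ext rfl)
    · exact Or.inr (Or.inl (Subtype.ext rfl))
    · exact Or.inr (Or.inr (Or.inl (Subtype.ext rfl)))
    · exact Or.inr (Or.inr (Or.inr (Or.inl (Subtype.ext rfl))))
    · exact Or.inr (Or.inr (Or.inr (Or.inr (Or.inl (Subtype.ext rfl)))))
    · exact Or.inr (Or.inr (Or.inr (Or.inr (Or.inr (Subtype.ext rfl)))))
  | one =>
    intro hst
    rw [show (⟨1, hst⟩ : ↥StabG) = 1 from Subtype.ext rfl]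
    exact one_mem _
  | mul g1 g2 h1 h2 p1 p2 =>
    intro hst
    have hst1 : g1 ∈ StabG := HS_le_st h1
    have hst2 : g2 ∈ StabG := HS_le_st h2
    rw [show (⟨g1 * g2, hst⟩ : ↥StabG) = ⟨g1, hst1⟩ * ⟨g2, hst2⟩ from Subtype.ext rfl]
    exact mul_mem (p1 hst1) (p2 hst2)
  | inv g hg p =>
    intro hst
    have hst1 : g ∈ StabG := HS_le_st hg
    rw [show (⟨g⁻¹, hst⟩ : ↥StabG) = (⟨g, hst1⟩ : ↥StabG)⁻¹ from Subtype.ext rfl]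
    exact inv_mem (p hst1)

theorem sec_bS_f : sec false bS = aP := Equiv.ext fun l => rfl
theorem sec_bS_t : sec true bS = cP := Equiv.ext fun l => rfl
theorem sec_cS_f : sec false cS = aP := Equiv.ext fun l => rfl
theorem sec_cS_t : sec true cS = dP := Equiv.ext fun l => rfl
theorem sec_dS_f : sec false dS = 1 := Equiv.ext fun l => rfl
theorem sec_dS_t : sec true dS = bP := Equiv.ext fun l => rfl
theorem sec_abaS_f : sec false abaS = cP := Equiv.ext fun l => rfl
theorem sec_abaS_t : sec true abaS = aP := Equiv.ext fun l => rfl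
theorem sec_acaS_f : sec false acaS = dP := Equiv.ext fun l => rfl
theorem sec_acaS_t : sec true acaS = aP := Equiv.ext fun l => rfl
theorem sec_adaS_f : sec false adaS = bP := Equiv.ext fun l => rfl
theorem sec_adaS_t : sec true adaS = 1 := Equiv.ext fun l => rfl

theorem sec_HSS_grig (x : Bool) : ∀ σ, σ ∈ HSS → sec x σ ∈ Grigorchuk := by
  intro σ hσ
  induction hσ using Subgroup.closure_induction with
  | mem τ hτ =>
    rcases hτ with rfl | rfl | rfl | rfl | rfl | rfl <;> cases x
    · rw [sec_bS_f]; exact aP_mem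
    · rw [sec_bS_t]; exact cP_mem
    · rw [sec_cS_f]; exact aP_mem
    · rw [sec_cS_t]; exact dP_mem
    · rw [sec_dS_f]; exact one_mem _
    · rw [sec_dS_t]; exact bP_mem
    · rw [sec_abaS_f]; exact cP_mem
    · rw [sec_abaS_t]; exact aP_mem
    · rw [sec_acaS_f]; exact dP_mem
    · rw [sec_acaS_t]; exact aP_mem
    · rw [sec_adaS_f]; exact bP_mem
    · rw [sec_adaS_t]; exact one_mem _
  | one => rw [map_one]; exact one_mem _
  | mul g1 g2 h1 h2 p1 p2 => rw [map_mul]; exact mul_mem p1 p2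
  | inv g hg p => rw [map_inv]; exact inv_mem p

theorem HSS_val_HS : ∀ σ : ↥StabG, σ ∈ HSS → σ.1 ∈ HS := by
  intro σ hσ
  induction hσ using Subgroup.closure_induction with
  | mem τ hτ =>
    apply Subgroup.subset_closure
    rcases hτ with rfl | rfl | rfl | rfl | rfl | rfl
    · exact Or.inl rfl
    · exact Or.inr (Or.inl rfl)
    · exact Or.inr (Or.inr (Or.inl rfl))
    · exact Or.inr (Or.inr (Or.inr (Or.inl rfl)))
    · exact Or.inr (Or.inr (Or.inr (Or.inr (Or.inl rfl))))
    · exact Or.inr (Or.inr (Or.inr (Or.inr (Or.inr rfl))))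
  | one => exact one_mem _
  | mul g1 g2 h1 h2 p1 p2 => exact mul_mem p1 p2
  | inv g hg p => exact inv_mem p

def secG (x : Bool) : ↥HSS →* ↥Grigorchuk :=
  MonoidHom.codRestrict ((sec x).comp HSS.subtype) Grigorchuk
    (fun σ => sec_HSS_grig x σ.1 σ.2)

def Theta (k : ℕ) : ↥HSS →* HQ k × HQ k :=
  ((qk k).comp (secG false)).prod ((qk k).comp (secG true))

def iota : ↥HSS →* ↥Grigorchuk :=
  MonoidHom.codRestrict (StabG.subtype.comp HSS.subtype) Grigorchuk
    (fun σ => HS_le_grig (HSS_val_HS σ.1 σ.2))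

theorem Theta_eq (k : ℕ) (σ : ↥HSS) (u v : ↥Grigorchuk)
    (hu : sec false σ.1 = u.1) (hv : sec true σ.1 = v.1) :
    Theta k σ = (qk k u, qk k v) := by
  have h1 : secG false σ = u := Subtype.ext hu
  have h2 : secG true σ = v := Subtype.ext hv
  show (qk k (secG false σ), qk k (secG true σ)) = _
  rw [h1, h2]

/-- The generating pairs for the image of the stabilizer. -/
def Jk (k : ℕ) : Subgroup (HQ k × HQ k) :=
  Subgroup.closure {(aQ k, cQ k), (aQ k, dQ k), (1, bQ k), (cQ k, aQ k), (dQ k, aQ k), (bQ k, 1)}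

theorem range_Theta (k : ℕ) : (Theta k).range = Jk k := by
  rw [MonoidHom.range_eq_map,
    show (⊤ : Subgroup ↥HSS) = Subgroup.closure (Subtype.val ⁻¹' hsSetS) from
      (Subgroup.closure_closure_coe_preimage).symm,
    MonoidHom.map_closure]
  apply le_antisymm
  · apply (Subgroup.closure_le _).mpr
    rintro z ⟨σ, hσ, rfl⟩
    apply Subgroup.subset_closure
    rcases hσ with h | h | h | h | h | h
    · exact Or.inl (Theta_eq k σ aG cG (by rw [h]; exact sec_bS_f) (by rw [h]; exact sec_bS_t))
    · exact Or.inr (Or.inl (Theta_eq k σ aG dG (by rw [h]; exact sec_cS_f)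
        (by rw [h]; exact sec_cS_t)))
    · refine Or.inr (Or.inr (Or.inl ?_))
      rw [Theta_eq k σ 1 bG (by rw [h]; exact sec_dS_f) (by rw [h]; exact sec_dS_t), map_one]
      rfl
    · refine Or.inr (Or.inr (Or.inr (Or.inl ?_)))
      exact Theta_eq k σ cG aG (by rw [h]; exact sec_abaS_f) (by rw [h]; exact sec_abaS_t)
    · refine Or.inr (Or.inr (Or.inr (Or.inr (Or.inl ?_))))
      exact Theta_eq k σ dG aG (by rw [h]; exact sec_acaS_f) (by rw [h]; exact sec_acaS_t)
    · refine Or.inr (Or.inr (Or.inr (Or.inr (Or.inr ?_))))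
      have hx : ↑σ = adaS := h
      rw [Theta_eq k σ bG 1 (by rw [hx]; exact sec_adaS_f) (by rw [hx]; exact sec_adaS_t),
        map_one]
      rfl
  · apply (Subgroup.closure_le _).mpr
    have m1 : bS ∈ HSS := Subgroup.subset_closure (Or.inl rfl)
    have m2 : cS ∈ HSS := Subgroup.subset_closure (Or.inr (Or.inl rfl))
    have m3 : dS ∈ HSS := Subgroup.subset_closure (Or.inr (Or.inr (Or.inl rfl)))
    have m4 : abaS ∈ HSS := Subgroup.subset_closure (Or.inr (Or.inr (Or.inr (Or.inl rfl))))
    have m5 : acaS ∈ HSS :=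
      Subgroup.subset_closure (Or.inr (Or.inr (Or.inr (Or.inr (Or.inl rfl)))))
    have m6 : adaS ∈ HSS :=
      Subgroup.subset_closure (Or.inr (Or.inr (Or.inr (Or.inr (Or.inr rfl)))))
    rintro z (rfl | rfl | rfl | rfl | rfl | rfl) <;> apply Subgroup.subset_closure
    · exact ⟨⟨bS, m1⟩, Or.inl rfl, (Theta_eq k ⟨bS, m1⟩ aG cG sec_bS_f sec_bS_t).symm⟩
    · exact ⟨⟨cS, m2⟩, Or.inr (Or.inl rfl), (Theta_eq k ⟨cS, m2⟩ aG dG sec_cS_f sec_cS_t).symm⟩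
    · refine ⟨⟨dS, m3⟩, Or.inr (Or.inr (Or.inl rfl)), ?_⟩
      rw [Theta_eq k ⟨dS, m3⟩ 1 bG sec_dS_f sec_dS_t, map_one]
      rfl
    · exact ⟨⟨abaS, m4⟩, Or.inr (Or.inr (Or.inr (Or.inl rfl))),
        (Theta_eq k ⟨abaS, m4⟩ cG aG sec_abaS_f sec_abaS_t).symm⟩
    · exact ⟨⟨acaS, m5⟩, Or.inr (Or.inr (Or.inr (Or.inr (Or.inl rfl)))),
        (Theta_eq k ⟨acaS, m5⟩ dG aG sec_acaS_f sec_acaS_t).symm⟩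
    · refine ⟨⟨adaS, m6⟩, Or.inr (Or.inr (Or.inr (Or.inr (Or.inr rfl)))), ?_⟩
      rw [Theta_eq k ⟨adaS, m6⟩ bG 1 sec_adaS_f sec_adaS_t, map_one]
      rfl
theorem qk_eq_one_iff {k : ℕ} {g : ↥Grigorchuk} :
    qk k g = 1 ↔ ∀ l : LB, l.length ≤ k → g.1 l = l := by
  rw [show (1 : HQ k) = qk k 1 from (map_one _).symm, qk_eq_iff]
  simp

theorem ker_eq (k : ℕ) : ((qk (k+1)).comp iota).ker = (Theta k).ker := by
  ext σ
  rw [MonoidHom.mem_ker, MonoidHom.mem_ker, MonoidHom.comp_apply]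
  constructor
  · intro h
    have h1 : ∀ l : LB, l.length ≤ k + 1 → σ.1.1 l = l := qk_eq_one_iff.mp h
    have c : ∀ x : Bool, qk k (secG x σ) = 1 := by
      intro x
      apply qk_eq_one_iff.mpr
      intro l hl
      show (sec x σ.1) l = l
      rw [sec_apply, h1 (x :: l) (by simp only [List.length_cons]; omega)]
      rfl
    show (qk k (secG false σ), qk k (secG true σ)) = 1
    rw [c false, c true]
    rfl
  · intro h
    have c : ∀ x : Bool, qk k (secG x σ) = 1 := by
      intro x
      cases x
      · exact congrArg Prod.fst h
      · exact congrArg Prod.snd h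
    apply qk_eq_one_iff.mpr
    intro l hl
    rcases l with _ | ⟨x, xs⟩
    · exact apply_nil (iota σ)
    · have h2 : (sec x σ.1) xs = xs :=
        qk_eq_one_iff.mp (c x) xs (by simp only [List.length_cons] at hl; omega)
      have h3 := stab_cons σ.1.2 x xs
      show σ.1.1 (x :: xs) = x :: xs
      rw [← h3]
      rw [sec_apply] at h2
      rw [h2]

def alphaH (k : ℕ) : ↥HSS →* HQ (k + 1) := (qk (k + 1)).comp iota

def Ak (k : ℕ) : Subgroup (HQ (k + 1)) := (alphaH k).range

theorem card_Ak (k : ℕ) : Nat.card (Ak k) = Nat.card (Jk k) := by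
  rw [← range_Theta k]
  calc Nat.card (Ak k) = Nat.card (↥HSS ⧸ (alphaH k).ker) :=
        (Nat.card_congr (QuotientGroup.quotientKerEquivRange (alphaH k)).toEquiv).symm
    _ = Nat.card (↥HSS ⧸ (Theta k).ker) := by rw [show (alphaH k).ker = (Theta k).ker from ker_eq k]
    _ = Nat.card (Theta k).range :=
        Nat.card_congr (QuotientGroup.quotientKerEquivRange (Theta k)).toEquiv

theorem conj_Ak (k : ℕ) {z : HQ (k+1)} (hz : z ∈ Ak k) :
    aQ (k+1) * z * aQ (k+1) ∈ Ak k := by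
  obtain ⟨σ, rfl⟩ := hz
  have hval : σ.1.1 ∈ HS := HSS_val_HS σ.1 σ.2
  have hconj : aP * σ.1.1 * aP ∈ HS := conj_a_mem hval
  have hst : aP * σ.1.1 * aP ∈ StabG := HS_le_st hconj
  refine ⟨⟨⟨aP * σ.1.1 * aP, hst⟩, lift_HS _ hconj hst⟩, ?_⟩
  show qk (k+1) (iota ⟨⟨aP * σ.1.1 * aP, hst⟩, _⟩) = _
  rw [show iota ⟨⟨aP * σ.1.1 * aP, hst⟩, lift_HS _ hconj hst⟩ = aG * iota σ * aG from
    Subtype.ext rfl, map_mul, map_mul]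
  rfl

theorem cover_Ak (k : ℕ) : ∀ z : HQ (k+1), z ∈ Ak k ∨ aQ (k+1) * z ∈ Ak k := by
  intro z
  obtain ⟨g, rfl⟩ := qk_surj (k+1) z
  rcases cover g.1 g.2 with h | h
  · left
    have hst : g.1 ∈ StabG := HS_le_st h
    refine ⟨⟨⟨g.1, hst⟩, lift_HS _ h hst⟩, ?_⟩
    show qk (k+1) (iota _) = qk (k+1) g
    apply congrArg
    exact Subtype.ext rfl
  · right
    have hst : aP * g.1 ∈ StabG := HS_le_st h
    refine ⟨⟨⟨aP * g.1, hst⟩, lift_HS _ h hst⟩, ?_⟩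
    show qk (k+1) (iota _) = aQ (k+1) * qk (k+1) g
    rw [show aQ (k+1) * qk (k+1) g = qk (k+1) (aG * g) from (map_mul _ _ _).symm]
    apply congrArg
    exact Subtype.ext rfl

theorem aQ_not_mem (k : ℕ) : aQ (k+1) ∉ Ak k := by
  rintro ⟨σ, hσ⟩
  have h1 := qk_eq_iff.mp hσ [false] (by simp)
  have h2 : σ.1.1 [false] = [true] := h1
  have hh := σ.1.2 [false]
  rw [h2] at hh
  simp at hh

theorem index_Ak (k : ℕ) : (Ak k).index = 2 := by
  rw [Subgroup.index_eq_two_iff]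
  refine ⟨aQ (k+1), fun b => ?_⟩
  by_cases hb : b ∈ Ak k
  · refine Or.inr ⟨hb, fun hcon => ?_⟩
    have h3 : aQ (k+1) ∈ Ak k := by
      have h4 := (Ak k).mul_mem (inv_mem hb) hcon
      rwa [show b⁻¹ * (b * aQ (k+1)) = aQ (k+1) by group] at h4
    exact aQ_not_mem k h3
  · refine Or.inl ⟨?_, hb⟩
    rcases cover_Ak k b with h | h
    · exact absurd h hb
    · have h2 := conj_Ak k h
      rwa [show aQ (k+1) * (aQ (k+1) * b) * aQ (k+1) =
        (aQ (k+1) * aQ (k+1)) * b * aQ (k+1) by group, aQ_sq, one_mul] at h2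

theorem card_HQ_succ (k : ℕ) : Nat.card (HQ (k+1)) = 2 * Nat.card (Jk k) := by
  have h := Subgroup.index_mul_card (Ak k)
  rw [index_Ak k, card_Ak k] at h
  exact h.symm

theorem map_fst_Jk (k : ℕ) : Subgroup.map (MonoidHom.fst _ _) (Jk k) = ⊤ := by
  apply le_antisymm le_top
  rw [Jk, MonoidHom.map_closure, HQ_gen k]
  apply (Subgroup.closure_le _).mpr
  intro g hg
  rcases hg with rfl | rfl | rfl | rfl
  · exact Subgroup.subset_closure ⟨(aQ k, cQ k), Or.inl rfl, rfl⟩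
  · exact Subgroup.subset_closure
      ⟨(bQ k, 1), Or.inr (Or.inr (Or.inr (Or.inr (Or.inr rfl)))), rfl⟩
  · exact Subgroup.subset_closure ⟨(cQ k, aQ k), Or.inr (Or.inr (Or.inr (Or.inl rfl))), rfl⟩
  · exact Subgroup.subset_closure
      ⟨(dQ k, aQ k), Or.inr (Or.inr (Or.inr (Or.inr (Or.inl rfl)))), rfl⟩

theorem map_snd_Jk (k : ℕ) : Subgroup.map (MonoidHom.snd _ _) (Jk k) = ⊤ := by
  apply le_antisymm le_top
  rw [Jk, MonoidHom.map_closure, HQ_gen k]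
  apply (Subgroup.closure_le _).mpr
  intro g hg
  rcases hg with rfl | rfl | rfl | rfl
  · exact Subgroup.subset_closure ⟨(cQ k, aQ k), Or.inr (Or.inr (Or.inr (Or.inl rfl))), rfl⟩
  · exact Subgroup.subset_closure ⟨(1, bQ k), Or.inr (Or.inr (Or.inl rfl)), rfl⟩
  · exact Subgroup.subset_closure ⟨(aQ k, cQ k), Or.inl rfl, rfl⟩
  · exact Subgroup.subset_closure ⟨(aQ k, dQ k), Or.inr (Or.inl rfl), rfl⟩

theorem BkJ (k : ℕ) : ∀ u ∈ Bk k, ((u, 1) : HQ k × HQ k) ∈ Jk k := by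
  have hD : ∀ p : HQ k × HQ k, p ∈ Jk k → ∀ n, (n, (1:HQ k)) ∈ Jk k →
      ((p.1 * n * p.1⁻¹, (1:HQ k)) : HQ k × HQ k) ∈ Jk k := by
    intro p hp n hn
    have h2 := (Jk k).mul_mem ((Jk k).mul_mem hp hn) (inv_mem hp)
    have h3 : p * ((n, 1) : HQ k × HQ k) * p⁻¹ = (p.1 * n * p.1⁻¹, 1) := by
      refine Prod.ext rfl ?_
      show p.2 * 1 * p.2⁻¹ = 1
      simp
    rwa [h3] at h2
  set D : Subgroup (HQ k) := (Jk k).comap (MonoidHom.inl (HQ k) (HQ k)) with hDdef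
  haveI hnorm : D.Normal := by
    constructor
    intro n hn g
    rw [hDdef, Subgroup.mem_comap] at hn ⊢
    have hg : g ∈ Subgroup.map (MonoidHom.fst _ _) (Jk k) := by rw [map_fst_Jk]; trivial
    obtain ⟨p, hp, hpg⟩ := hg
    have h4 := hD p hp n hn
    rw [← hpg]
    exact h4
  intro u hu
  have hle : Bk k ≤ D := Subgroup.normalClosure_le_normal (by
    intro x hx
    rcases hx with rfl
    rw [SetLike.mem_coe, hDdef, Subgroup.mem_comap]
    exact Subgroup.subset_closure (Or.inr (Or.inr (Or.inr (Or.inr (Or.inr rfl))))))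
  have h2 := hle hu
  rw [hDdef, Subgroup.mem_comap] at h2
  exact h2
def xk (k : ℕ) : Qk k := qq k (aQ k)
def yk (k : ℕ) : Qk k := qq k (dQ k)

def Sk (k : ℕ) : Subgroup (Qk k × Qk k) :=
  Subgroup.closure {(xk k, yk k), (yk k, xk k)}

theorem xk_sq (k : ℕ) : xk k * xk k = 1 := by
  rw [xk, ← map_mul, aQ_sq, map_one]
theorem yk_sq (k : ℕ) : yk k * yk k = 1 := by
  rw [yk, ← map_mul, dQ_sq, map_one]
theorem xyk_pow (k : ℕ) :
    (xk k * yk k) * (xk k * yk k) * ((xk k * yk k) * (xk k * yk k)) = 1 := by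
  rw [xk, yk]
  simp only [← map_mul]
  rw [adQ_pow k, map_one]
theorem yxk_pow (k : ℕ) :
    (yk k * xk k) * (yk k * xk k) * ((yk k * xk k) * (yk k * xk k)) = 1 := by
  have hx : (xk k)⁻¹ = xk k := inv_eq_of_mul_eq_one_right (xk_sq k)
  have hy : (yk k)⁻¹ = yk k := inv_eq_of_mul_eq_one_right (yk_sq k)
  have h : yk k * xk k = (xk k * yk k)⁻¹ := by rw [mul_inv_rev, hx, hy]
  rw [h, show (xk k * yk k)⁻¹ * (xk k * yk k)⁻¹ * ((xk k * yk k)⁻¹ * (xk k * yk k)⁻¹) =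
    ((xk k * yk k) * (xk k * yk k) * ((xk k * yk k) * (xk k * yk k)))⁻¹ by group,
    xyk_pow k, inv_one]

theorem Jk_le_comap (k : ℕ) : Jk k ≤ (Sk k).comap ((qq k).prodMap (qq k)) := by
  apply (Subgroup.closure_le _).mpr
  rintro z (rfl | rfl | rfl | rfl | rfl | rfl) <;> rw [SetLike.mem_coe, Subgroup.mem_comap]
  · rw [show (MonoidHom.prodMap (qq k) (qq k)) (aQ k, cQ k) = (xk k, yk k) by
      show (qq k (aQ k), qq k (cQ k)) = _; rw [qq_c]; rfl]
    exact Subgroup.subset_closure (Or.inl rfl)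
  · exact Subgroup.subset_closure (Or.inl rfl)
  · rw [show (MonoidHom.prodMap (qq k) (qq k)) ((1 : HQ k), bQ k) = 1 by
      show (qq k 1, qq k (bQ k)) = 1; rw [qq_b, map_one]; rfl]
    exact one_mem _
  · rw [show (MonoidHom.prodMap (qq k) (qq k)) (cQ k, aQ k) = (yk k, xk k) by
      show (qq k (cQ k), qq k (aQ k)) = _; rw [qq_c]; rfl]
    exact Subgroup.subset_closure (Or.inr rfl)
  · exact Subgroup.subset_closure (Or.inr rfl)
  · rw [show (MonoidHom.prodMap (qq k) (qq k)) (bQ k, (1 : HQ k)) = 1 by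
      show (qq k (bQ k), qq k 1) = 1; rw [qq_b, map_one]; rfl]
    exact one_mem _

theorem card_Sk_le (k : ℕ) : Nat.card (Sk k) ≤ 8 := by
  have h := dihedral_card_le (G := Qk k × Qk k) (xk k, yk k) (yk k, xk k)
    (Prod.ext (xk_sq k) (yk_sq k))
    (Prod.ext (yk_sq k) (xk_sq k))
    (Prod.ext (xyk_pow k) (yxk_pow k))
  exact h

theorem map_snd_Sk (k : ℕ) : Subgroup.map (MonoidHom.snd _ _) (Sk k) = ⊤ := by
  apply le_antisymm le_top
  rw [Sk, MonoidHom.map_closure, Qk_gen k]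
  apply (Subgroup.closure_le _).mpr
  intro g hg
  rcases hg with rfl | rfl
  · exact Subgroup.subset_closure ⟨(yk k, xk k), Or.inr rfl, rfl⟩
  · exact Subgroup.subset_closure ⟨(xk k, yk k), Or.inl rfl, rfl⟩

theorem Sk_snd_triv (k : ℕ) (hk : 3 ≤ k) :
    ∀ u : Qk k, ((u, (1 : Qk k)) : Qk k × Qk k) ∈ Sk k → u = 1 := by
  set p2 : ↥(Sk k) →* Qk k := (MonoidHom.snd _ _).comp (Sk k).subtype with hp2
  have hsurj : Function.Surjective p2 := by
    intro z
    have hz : z ∈ Subgroup.map (MonoidHom.snd _ _) (Sk k) := by rw [map_snd_Sk]; trivial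
    obtain ⟨p, hp, rfl⟩ := hz
    exact ⟨⟨p, hp⟩, rfl⟩
  haveI : Fintype ↥(Sk k) := Fintype.ofFinite _
  haveI : Fintype (Qk k) := Fintype.ofFinite _
  have hcard : Fintype.card ↥(Sk k) = Fintype.card (Qk k) := by
    have h1 : Nat.card ↥(Sk k) ≤ 8 := card_Sk_le k
    have h2 : Nat.card (Qk k) = 8 := card_Qk k hk
    have h3 : Nat.card (Qk k) ≤ Nat.card ↥(Sk k) := Nat.card_le_card_of_surjective _ hsurj
    rw [← Nat.card_eq_fintype_card, ← Nat.card_eq_fintype_card]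
    omega
  have hbij : Function.Bijective p2 :=
    (Fintype.bijective_iff_surjective_and_card _).mpr ⟨hsurj, hcard⟩
  intro u hu
  have h5 : p2 ⟨(u, 1), hu⟩ = p2 1 := by
    show (1 : Qk k) = p2 1
    rw [map_one]
  have h6 := hbij.1 h5
  have h7 : ((u, 1) : Qk k × Qk k) = 1 := congrArg Subtype.val h6
  exact congrArg Prod.fst h7

theorem mem_Bk_of_pair (k : ℕ) (hk : 3 ≤ k) {u : HQ k}
    (hu : ((u, (1 : HQ k)) : HQ k × HQ k) ∈ Jk k) : u ∈ Bk k := by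
  have h1 := Jk_le_comap k hu
  rw [Subgroup.mem_comap] at h1
  have h2 : ((qq k u, (1 : Qk k)) : Qk k × Qk k) ∈ Sk k := by
    have : (MonoidHom.prodMap (qq k) (qq k)) ((u, (1:HQ k)) : HQ k × HQ k)
        = (qq k u, (1 : Qk k)) := by
      show (qq k u, qq k 1) = _
      rw [map_one]
    rwa [this] at h1
  have h3 : qq k u = 1 := Sk_snd_triv k hk _ h2
  have h4 : u ∈ (QuotientGroup.mk' (Bk k)).ker := by
    rw [MonoidHom.mem_ker]
    exact h3
  rwa [QuotientGroup.ker_mk'] at h4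

theorem card_Jk (k : ℕ) (hk : 3 ≤ k) :
    Nat.card (Jk k) = Nat.card (HQ k) * Nat.card (Bk k) := by
  set p2 : ↥(Jk k) →* HQ k := (MonoidHom.snd _ _).comp (Jk k).subtype with hp2
  have hrange : p2.range = ⊤ := by
    apply le_antisymm le_top
    intro z _
    have hz : z ∈ Subgroup.map (MonoidHom.snd _ _) (Jk k) := by rw [map_snd_Jk]; trivial
    obtain ⟨p, hp, rfl⟩ := hz
    exact ⟨⟨p, hp⟩, rfl⟩
  have hker : Nat.card p2.ker = Nat.card (Bk k) := by
    have hbij : Function.Bijective (fun s : ↥p2.ker =>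
        (⟨s.1.1.1, by
          have hs1 : s.1.1 ∈ Jk k := s.1.2
          have hs2 : s.1.1.2 = 1 := s.2
          have : ((s.1.1.1, (1 : HQ k)) : HQ k × HQ k) ∈ Jk k := by
            rw [← hs2]
            exact hs1
          exact mem_Bk_of_pair k hk this⟩ : ↥(Bk k))) := by
      constructor
      · rintro ⟨⟨⟨u1, u2⟩, hu⟩, hku⟩ ⟨⟨⟨v1, v2⟩, hv⟩, hkv⟩ h
        have h1 : u1 = v1 := congrArg Subtype.val h
        have h2 : u2 = 1 := hku
        have h3 : v2 = 1 := hkv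
        apply Subtype.ext
        apply Subtype.ext
        rw [Prod.ext_iff]
        exact ⟨h1, h2.trans h3.symm⟩
      · rintro ⟨u, hu⟩
        refine ⟨⟨⟨(u, 1), BkJ k u hu⟩, ?_⟩, rfl⟩
        show ((u, (1:HQ k)).2 : HQ k) = 1
        rfl
    exact Nat.card_congr (Equiv.ofBijective _ hbij)
  have hLag := Subgroup.card_eq_card_quotient_mul_card_subgroup p2.ker
  rw [hker] at hLag
  have hquot : Nat.card (↥(Jk k) ⧸ p2.ker) = Nat.card (HQ k) := by
    rw [Nat.card_congr (QuotientGroup.quotientKerEquivRange p2).toEquiv, hrange]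
    exact Nat.card_congr Subgroup.topEquiv.toEquiv
  rw [hquot] at hLag
  exact hLag

theorem recursion (k : ℕ) (hk : 3 ≤ k) :
    4 * Nat.card (HQ (k+1)) = Nat.card (HQ k) * Nat.card (HQ k) := by
  rw [card_HQ_succ k, card_Jk k hk]
  have h8 := card_Bk k hk
  rw [h8]
  ring

theorem card_HQ_formula : ∀ k, 3 ≤ k → Nat.card (HQ k) = 2 ^ (5 * 2 ^ (k - 3) + 2) := by
  intro k hk
  induction k, hk using Nat.le_induction with
  | base => rw [card_HQ3]; norm_num
  | succ n hn ih =>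
    have hrec := recursion n hn
    rw [ih] at hrec
    have hexp : (n + 1 - 3) = (n - 3) + 1 := by omega
    rw [hexp]
    have h2 : (2:ℕ) ^ (5 * 2 ^ (n-3) + 2) * 2 ^ (5 * 2 ^ (n-3) + 2)
        = 4 * 2 ^ (5 * 2 ^ ((n-3)+1) + 2) := by
      rw [← pow_add, pow_succ]
      rw [show 5 * 2 ^ (n-3) + 2 + (5 * 2 ^ (n-3) + 2) = (5 * (2 ^ (n-3) * 2) + 2) + 2 by ring,
        pow_add (2:ℕ) (5 * (2 ^ (n-3) * 2) + 2) 2]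
      ring
    rw [h2] at hrec
    omega

theorem grig_card (k : ℕ) (hk : 3 ≤ k) :
    Nat.card (Set.range (fun (g : Grigorchuk) =>
        (fun l : {l : List Bool // l.length ≤ k} =>
          ((g : Equiv.Perm (List Bool)) l.1 : List Bool))))
      = 2 ^ (5 * 2 ^ (k - 3) + 2) := by
  rw [← card_HQ_formula k hk]
  apply Nat.card_congr
  symm
  apply Equiv.ofBijective (f := fun x : HQ k => (Quotient.liftOn' x
    (fun g => (⟨fun l : {l : List Bool // l.length ≤ k} => g.1 l.1, ⟨g, rfl⟩⟩ :
      Set.range (fun (g : Grigorchuk) =>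
        (fun l : {l : List Bool // l.length ≤ k} =>
          ((g : Equiv.Perm (List Bool)) l.1 : List Bool)))))
    (by
      intro g h hr
      rw [QuotientGroup.leftRel_apply] at hr
      apply Subtype.ext
      funext l
      show g.1 l.1 = h.1 l.1
      have hk2 := mem_ker_phi.mp hr l.1 l.2
      simp only [Subgroup.coe_mul, InvMemClass.coe_inv, Equiv.Perm.mul_apply] at hk2
      rw [Equiv.Perm.inv_eq_iff_eq] at hk2
      exact hk2.symm)))
  constructor
  · intro x y
    refine Quotient.inductionOn₂' x y ?_
    intro g h hgh
    have h1 : ∀ l : {l : List Bool // l.length ≤ k}, g.1 l.1 = h.1 l.1 := by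
      intro l
      exact congrFun (congrArg Subtype.val hgh) l
    have : qk k g = qk k h := qk_eq_iff.mpr (fun l hl => h1 ⟨l, hl⟩)
    exact this
  · rintro ⟨f, ⟨g, rfl⟩⟩
    exact ⟨qk k g, rfl⟩

/-- The congruence quotient `Γ_k` of the first Grigorchuk group — realized as the set of
restrictions of elements of `Γ` to the first `k` levels of the tree — has cardinality
`2 ^ (5 · 2 ^ (k - 3) + 2)` for every `k ≥ 3`. -/
theorem grig_stmt15 (k : ℕ) (hk : 3 ≤ k) :
    Nat.card (Set.range (fun (g : Grigorchuk) =>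
        (fun l : {l : List Bool // l.length ≤ k} =>
          ((g : Equiv.Perm (List Bool)) l.1 : List Bool))))
      = 2 ^ (5 * 2 ^ (k - 3) + 2) := by
  exact grig_card k hk
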